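/- arXiv:1707.00114 — 4 statements merged into one kernel-verified Lean document; each statement's English description precedes it below -/
import Mathlib

section
/- In the bivariate Poisson sampling model, the moment estimators are consistent: as M → ∞, p̂₁ converges in probability to p₁, p̂₂ converges in probability to p₂, and λ̂ converges in probability to λ. -/
open MeasureTheory ProbabilityTheory Filter Finset Asymptotics
open scoped Nat ENNReal NNReal

section Helpers

lemma hs0' (r : ℝ) : HasSum (fun n : ℕ => r ^ n / n !) (Real.exp r) := by
  rw [Real.exp_eq_exp_ℝ]
  exact NormedSpace.expSeries_div_hasSum_exp r

lemma hs1' (r : ℝ) : HasSum (fun n : ℕ => (n : ℝ) * r ^ n / n !) (r * Real.exp r) := by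
  refine (hasSum_nat_add_iff' 1).mp ?_
  rw [show ∑ i ∈ range 1, ((i : ℝ) * r ^ i / i !) = 0 by simp, sub_zero]
  have h := (hs0' r).mul_left r
  convert h using 1
  · rfl
  funext n
  rw [Nat.factorial_succ]
  push_cast
  field_simp
  ring

lemma hs2' (r : ℝ) :
    HasSum (fun n : ℕ => (n : ℝ) * ((n : ℝ) - 1) * r ^ n / n !) (r ^ 2 * Real.exp r) := by
  refine (hasSum_nat_add_iff' 2).mp ?_
  rw [show ∑ i ∈ range 2, ((i : ℝ) * ((i : ℝ) - 1) * r ^ i / i !) = 0 by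
    norm_num [Finset.sum_range_succ], sub_zero]
  have h := (hs0' r).mul_left (r ^ 2)
  convert h using 1
  · rfl
  funext n
  rw [show n + 2 = (n + 1) + 1 from rfl, Nat.factorial_succ, Nat.factorial_succ]
  push_cast
  field_simp
  ring

lemma hs_sq' (r : ℝ) :
    HasSum (fun n : ℕ => (n : ℝ) ^ 2 * r ^ n / n !) ((r ^ 2 + r) * Real.exp r) := by
  have h := (hs2' r).add (hs1' r)
  have e : (fun n : ℕ => (n : ℝ) * ((n : ℝ) - 1) * r ^ n / n ! + (n : ℝ) * r ^ n / n !)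
      = fun n : ℕ => (n : ℝ) ^ 2 * r ^ n / n ! := by funext n; ring
  rw [e] at h
  convert h using 1
  ring

lemma poisson_integral' (r : ℝ≥0) (f : ℕ → ℝ) (hf : ∀ n, 0 ≤ f n) {S : ℝ}
    (h : HasSum (fun n => poissonPMFReal r n * f n) S) :
    Integrable f (poissonMeasure r) ∧ ∫ n, f n ∂(poissonMeasure r) = S := by
  have hnn : ∀ n, 0 ≤ poissonPMFReal r n * f n :=
    fun n => mul_nonneg poissonPMFReal_nonneg (hf n)
  have hsingleton : ∀ n : ℕ, (poissonMeasure r) {n} = ENNReal.ofReal (poissonPMFReal r n) := by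
    intro n
    rw [poissonMeasure_singleton]
    rfl
  have hint : Integrable f (poissonMeasure r) := by
    refine ⟨measurable_from_nat.aestronglyMeasurable, ?_⟩
    rw [HasFiniteIntegral, lintegral_countable']
    have : ∀ n : ℕ, ‖f n‖ₑ * (poissonMeasure r) {n}
        = ENNReal.ofReal (poissonPMFReal r n * f n) := by
      intro n
      rw [hsingleton n, ENNReal.ofReal_mul poissonPMFReal_nonneg, mul_comm]
      congr 1
      rw [← ofReal_norm, Real.norm_of_nonneg (hf n)]
    rw [tsum_congr this, ← ENNReal.ofReal_tsum_of_nonneg hnn h.summable]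
    exact ENNReal.ofReal_lt_top
  refine ⟨hint, ?_⟩
  rw [integral_poissonMeasure' hint]
  rw [← h.tsum_eq]
  congr 1 with n

lemma poisson_exp_pow' (r : ℝ≥0) (k : ℕ) {S : ℝ}
    (h : HasSum (fun n : ℕ => (n : ℝ) ^ k * (r : ℝ) ^ n / n !) (S * Real.exp r)) :
    Integrable (fun n : ℕ => (n : ℝ) ^ k) (poissonMeasure r) ∧
      ∫ n, (n : ℝ) ^ k ∂(poissonMeasure r) = S := by
  refine poisson_integral' r _ (fun n => by positivity) ?_
  have h2 := h.mul_left (Real.exp (-(r : ℝ)))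
  have e : (fun n : ℕ => Real.exp (-(r : ℝ)) * ((n : ℝ) ^ k * (r : ℝ) ^ n / n !))
      = fun n => poissonPMFReal r n * (n : ℝ) ^ k := by
    funext n
    rw [poissonPMFReal]
    ring
  rw [e] at h2
  convert h2 using 1
  · rfl
  rw [Real.exp_neg]
  field_simp

lemma poisson_moment_one' (r : ℝ≥0) :
    Integrable (fun n : ℕ => (n : ℝ)) (poissonMeasure r) ∧
      ∫ n, (n : ℝ) ∂(poissonMeasure r) = r := by
  have h := poisson_exp_pow' r 1 (S := r) (by simpa using hs1' (r : ℝ))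
  simpa using h

lemma poisson_moment_two' (r : ℝ≥0) :
    Integrable (fun n : ℕ => (n : ℝ) ^ 2) (poissonMeasure r) ∧
      ∫ n, (n : ℝ) ^ 2 ∂(poissonMeasure r) = (r : ℝ) ^ 2 + r :=
  poisson_exp_pow' r 2 (hs_sq' (r : ℝ))

variable {Ω : Type*} [MeasurableSpace Ω] {μ : Measure Ω}

lemma pois_transfer' {Z : Ω → ℕ} (hZ : Measurable Z) {r : ℝ≥0}
    (hmap : μ.map Z = poissonMeasure r) :
    (Integrable (fun ω => (Z ω : ℝ)) μ ∧ ∫ ω, (Z ω : ℝ) ∂μ = r) ∧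
    (Integrable (fun ω => (Z ω : ℝ) ^ 2) μ ∧ ∫ ω, (Z ω : ℝ) ^ 2 ∂μ = (r : ℝ) ^ 2 + r) := by
  have h1 := poisson_moment_one' r
  have h2 := poisson_moment_two' r
  rw [← hmap] at h1 h2
  have hm1 : AEStronglyMeasurable (fun n : ℕ => (n : ℝ)) (μ.map Z) :=
    measurable_from_nat.aestronglyMeasurable
  have hm2 : AEStronglyMeasurable (fun n : ℕ => (n : ℝ) ^ 2) (μ.map Z) :=
    measurable_from_nat.aestronglyMeasurable
  refine ⟨⟨?_, ?_⟩, ?_, ?_⟩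
  · exact (integrable_map_measure hm1 hZ.aemeasurable).mp h1.1
  · rw [← h1.2, integral_map hZ.aemeasurable hm1]
  · exact (integrable_map_measure hm2 hZ.aemeasurable).mp h2.1
  · rw [← h2.2, integral_map hZ.aemeasurable hm2]

end Helpers


/-- Sample mean `r̄ᵢ` of `R_{m,i} = X_{m,i} + Y_m` over the first `M` items. -/
noncomputable def rbar {Ω : Type*} (X Y : ℕ → Ω → ℕ) (M : ℕ) (ω : Ω) : ℝ :=
  (∑ m ∈ Finset.range M, ((X m ω : ℝ) + (Y m ω : ℝ))) / M

/-- Sample covariance `Ŝ₁₂` of `(R_{m,1}, R_{m,2})` over the first `M` items. -/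
noncomputable def sCov {Ω : Type*} (X1 X2 Y : ℕ → Ω → ℕ) (M : ℕ) (ω : Ω) : ℝ :=
  (∑ m ∈ Finset.range M,
      (((X1 m ω : ℝ) + (Y m ω : ℝ)) - rbar X1 Y M ω) *
      (((X2 m ω : ℝ) + (Y m ω : ℝ)) - rbar X2 Y M ω)) / ((M : ℝ) - 1)

/-- Sample mean `x̄` (or `ȳ`) of a single count sequence over the first `M` items. -/
noncomputable def xbar {Ω : Type*} (X : ℕ → Ω → ℕ) (M : ℕ) (ω : Ω) : ℝ :=
  (∑ m ∈ Finset.range M, (X m ω : ℝ)) / M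

/-- The covariance of two real random variables. -/
noncomputable def covar {Ω : Type*} [MeasurableSpace Ω] (μ : Measure Ω) (f g : Ω → ℝ) : ℝ :=
  ∫ ω, (f ω - ∫ x, f x ∂μ) * (g ω - ∫ x, g x ∂μ) ∂μ

/-- consistency of the moment estimators `p̂₁, p̂₂, λ̂`. -/
theorem moment_estimators_consistent
    {Ω : Type*} [MeasurableSpace Ω] (μ : Measure Ω) [IsProbabilityMeasure μ]
    (lam p1 p2 : ℝ) (hlam : 0 < lam)
    (hp1 : p1 ∈ Set.Ioo (0 : ℝ) 1) (hp2 : p2 ∈ Set.Ioo (0 : ℝ) 1)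
    (X1 X2 Y : ℕ → Ω → ℕ)
    (hmX1 : ∀ m, Measurable (X1 m)) (hmX2 : ∀ m, Measurable (X2 m))
    (hmY : ∀ m, Measurable (Y m))
    (hindep : iIndepFun
      (fun q : ℕ × Fin 3 => ![X1 q.1, X2 q.1, Y q.1] q.2) μ)
    (hX1 : ∀ m, μ.map (X1 m) = poissonMeasure (lam * p1 * (1 - p2)).toNNReal)
    (hX2 : ∀ m, μ.map (X2 m) = poissonMeasure (lam * p2 * (1 - p1)).toNNReal)
    (hY : ∀ m, μ.map (Y m) = poissonMeasure (lam * p1 * p2).toNNReal) :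
    TendstoInMeasure μ (fun M ω => sCov X1 X2 Y M ω / rbar X2 Y M ω) atTop
      (fun _ => p1) ∧
    TendstoInMeasure μ (fun M ω => sCov X1 X2 Y M ω / rbar X1 Y M ω) atTop
      (fun _ => p2) ∧
    TendstoInMeasure μ (fun M ω => rbar X1 Y M ω * rbar X2 Y M ω / sCov X1 X2 Y M ω) atTop
      (fun _ => lam) := by
  obtain ⟨hp1a, hp1b⟩ := hp1
  obtain ⟨hp2a, hp2b⟩ := hp2
  set ra := (lam * p1 * (1 - p2)).toNNReal with hra_def
  set rb := (lam * p2 * (1 - p1)).toNNReal with hrb_def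
  set rc := (lam * p1 * p2).toNNReal with hrc_def
  have hra : (ra : ℝ) = lam * p1 * (1 - p2) :=
    Real.coe_toNNReal _ (mul_pos (mul_pos hlam hp1a) (by linarith)).le
  have hrb : (rb : ℝ) = lam * p2 * (1 - p1) :=
    Real.coe_toNNReal _ (mul_pos (mul_pos hlam hp2a) (by linarith)).le
  have hrc : (rc : ℝ) = lam * p1 * p2 :=
    Real.coe_toNNReal _ (mul_pos (mul_pos hlam hp1a) hp2a).le
  set f : ℕ × Fin 3 → Ω → ℕ := fun q => ![X1 q.1, X2 q.1, Y q.1] q.2 with hf_def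
  have hfm : ∀ q, Measurable (f q) := by
    rintro ⟨m, j⟩
    fin_cases j
    · exact hmX1 m
    · exact hmX2 m
    · exact hmY m
  -- real-valued versions
  set R1 : ℕ → Ω → ℝ := fun m ω => (X1 m ω : ℝ) + (Y m ω : ℝ) with hR1_def
  set R2 : ℕ → Ω → ℝ := fun m ω => (X2 m ω : ℝ) + (Y m ω : ℝ) with hR2_def
  set P : ℕ → Ω → ℝ := fun m ω => R1 m ω * R2 m ω with hP_def
  -- moments
  have mX1 := fun m => pois_transfer' (hmX1 m) (hX1 m)
  have mX2 := fun m => pois_transfer' (hmX2 m) (hX2 m)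
  have mY := fun m => pois_transfer' (hmY m) (hY m)
  have neq : ∀ (m n : ℕ) (i j : Fin 3), m ≠ n ∨ i ≠ j →
      ((m, i) : ℕ × Fin 3) ≠ (n, j) := by
    rintro m n i j h heq
    rw [Prod.ext_iff] at heq
    rcases h with h | h
    · exact h heq.1
    · exact h heq.2
  -- casting map
  have castm : Measurable (fun n : ℕ => (n : ℝ)) := measurable_from_nat
  -- pairwise independence of R1 family
  have pairR1 : Pairwise (Function.onFun (IndepFun · · μ) R1) := by
    intro m n hmn
    have h := hindep.indepFun_prodMk_prodMk hfm (m, 0) (m, 2) (n, 0) (n, 2)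
      (neq _ _ _ _ (Or.inl hmn)) (neq _ _ _ _ (Or.inl hmn))
      (neq _ _ _ _ (Or.inl hmn)) (neq _ _ _ _ (Or.inl hmn))
    have hφ : Measurable (fun p : ℕ × ℕ => (p.1 : ℝ) + (p.2 : ℝ)) :=
      (castm.comp measurable_fst).add (castm.comp measurable_snd)
    exact h.comp hφ hφ
  have pairR2 : Pairwise (Function.onFun (IndepFun · · μ) R2) := by
    intro m n hmn
    have h := hindep.indepFun_prodMk_prodMk hfm (m, 1) (m, 2) (n, 1) (n, 2)
      (neq _ _ _ _ (Or.inl hmn)) (neq _ _ _ _ (Or.inl hmn))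
      (neq _ _ _ _ (Or.inl hmn)) (neq _ _ _ _ (Or.inl hmn))
    have hφ : Measurable (fun p : ℕ × ℕ => (p.1 : ℝ) + (p.2 : ℝ)) :=
      (castm.comp measurable_fst).add (castm.comp measurable_snd)
    exact h.comp hφ hφ
  -- identically distributed
  have hmapPair1 : ∀ m, μ.map (fun ω => (X1 m ω, Y m ω))
      = (poissonMeasure ra).prod (poissonMeasure rc) := by
    intro m
    have hind : IndepFun (X1 m) (Y m) μ :=
      hindep.indepFun (neq m m 0 2 (Or.inr (by decide)))
    rw [(indepFun_iff_map_prod_eq_prod_map_map (hmX1 m).aemeasurable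
      (hmY m).aemeasurable).mp hind, hX1 m, hY m]
  have hmapPair2 : ∀ m, μ.map (fun ω => (X2 m ω, Y m ω))
      = (poissonMeasure rb).prod (poissonMeasure rc) := by
    intro m
    have hind : IndepFun (X2 m) (Y m) μ :=
      hindep.indepFun (neq m m 1 2 (Or.inr (by decide)))
    rw [(indepFun_iff_map_prod_eq_prod_map_map (hmX2 m).aemeasurable
      (hmY m).aemeasurable).mp hind, hX2 m, hY m]
  have identR1 : ∀ m, IdentDistrib (R1 m) (R1 0) μ μ := by
    intro m
    have base : IdentDistrib (fun ω => (X1 m ω, Y m ω)) (fun ω => (X1 0 ω, Y 0 ω)) μ μ :=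
      ⟨((hmX1 m).prodMk (hmY m)).aemeasurable, ((hmX1 0).prodMk (hmY 0)).aemeasurable,
        by rw [hmapPair1 m, hmapPair1 0]⟩
    exact base.comp ((castm.comp measurable_fst).add (castm.comp measurable_snd))
  have identR2 : ∀ m, IdentDistrib (R2 m) (R2 0) μ μ := by
    intro m
    have base : IdentDistrib (fun ω => (X2 m ω, Y m ω)) (fun ω => (X2 0 ω, Y 0 ω)) μ μ :=
      ⟨((hmX2 m).prodMk (hmY m)).aemeasurable, ((hmX2 0).prodMk (hmY 0)).aemeasurable,
        by rw [hmapPair2 m, hmapPair2 0]⟩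
    exact base.comp ((castm.comp measurable_fst).add (castm.comp measurable_snd))
  -- integrability and means of R1 R2
  have intR1 : ∀ m, Integrable (R1 m) μ := fun m => (mX1 m).1.1.add (mY m).1.1
  have intR2 : ∀ m, Integrable (R2 m) μ := fun m => (mX2 m).1.1.add (mY m).1.1
  have eR1 : ∫ ω, R1 0 ω ∂μ = (ra : ℝ) + rc := by
    rw [hR1_def]
    rw [integral_add (mX1 0).1.1 (mY 0).1.1, (mX1 0).1.2, (mY 0).1.2]
  have eR2 : ∫ ω, R2 0 ω ∂μ = (rb : ℝ) + rc := by
    rw [hR2_def]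
    rw [integral_add (mX2 0).1.1 (mY 0).1.1, (mX2 0).1.2, (mY 0).1.2]
  -- strong law for R1, R2
  have slln1 : ∀ᵐ ω ∂μ, Filter.Tendsto (fun M : ℕ => (∑ m ∈ range M, R1 m ω) / M)
      atTop (nhds ((ra : ℝ) + rc)) := by
    have h := strong_law_ae_real R1 (intR1 0) pairR1 identR1
    rw [eR1] at h
    exact h
  have slln2 : ∀ᵐ ω ∂μ, Filter.Tendsto (fun M : ℕ => (∑ m ∈ range M, R2 m ω) / M)
      atTop (nhds ((rb : ℝ) + rc)) := by
    have h := strong_law_ae_real R2 (intR2 0) pairR2 identR2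
    rw [eR2] at h
    exact h
  -- the product sequence P
  set T : ℕ → Ω → (ℕ × ℕ) × ℕ := fun m ω => ((X1 m ω, X2 m ω), Y m ω) with hT_def
  have hTm : ∀ m, Measurable (T m) :=
    fun m => ((hmX1 m).prodMk (hmX2 m)).prodMk (hmY m)
  set ψ : (ℕ × ℕ) × ℕ → ℝ :=
    fun p => ((p.1.1 : ℝ) + (p.2 : ℝ)) * ((p.1.2 : ℝ) + (p.2 : ℝ)) with hψ_def
  have hψm : Measurable ψ := by
    apply Measurable.mul
    · exact ((castm.comp (measurable_fst.comp measurable_fst)).add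
        (castm.comp measurable_snd))
    · exact ((castm.comp (measurable_snd.comp measurable_fst)).add
        (castm.comp measurable_snd))
  have hPT : ∀ m, P m = ψ ∘ T m := fun m => rfl
  have hmapT : ∀ m, μ.map (T m)
      = ((poissonMeasure ra).prod (poissonMeasure rb)).prod (poissonMeasure rc) := by
    intro m
    have hind12 : IndepFun (X1 m) (X2 m) μ :=
      hindep.indepFun (neq m m 0 1 (Or.inr (by decide)))
    have hmap12 : μ.map (fun ω => (X1 m ω, X2 m ω))
        = (poissonMeasure ra).prod (poissonMeasure rb) := by
      rw [(indepFun_iff_map_prod_eq_prod_map_map (hmX1 m).aemeasurable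
        (hmX2 m).aemeasurable).mp hind12, hX1 m, hX2 m]
    have hind : IndepFun (fun ω => (X1 m ω, X2 m ω)) (Y m) μ :=
      hindep.indepFun_prodMk hfm (m, 0) (m, 1) (m, 2)
        (neq m m 0 2 (Or.inr (by decide))) (neq m m 1 2 (Or.inr (by decide)))
    rw [(indepFun_iff_map_prod_eq_prod_map_map ((hmX1 m).prodMk (hmX2 m)).aemeasurable
      (hmY m).aemeasurable).mp hind, hmap12, hY m]
  have identP : ∀ m, IdentDistrib (P m) (P 0) μ μ := by
    intro m
    have base : IdentDistrib (T m) (T 0) μ μ :=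
      ⟨(hTm m).aemeasurable, (hTm 0).aemeasurable, by rw [hmapT m, hmapT 0]⟩
    rw [hPT m, hPT 0]
    exact base.comp hψm
  -- pairwise independence of P
  have pairP : Pairwise (Function.onFun (IndepFun · · μ) P) := by
    intro m n hmn
    classical
    have hd : Disjoint ({(m, 0), (m, 1), (m, 2)} : Finset (ℕ × Fin 3))
        ({(n, 0), (n, 1), (n, 2)} : Finset (ℕ × Fin 3)) := by
      rw [Finset.disjoint_left]
      intro q hq hq'
      simp only [Finset.mem_insert, Finset.mem_singleton] at hq hq'
      rcases hq with rfl | rfl | rfl <;> rcases hq' with h | h | h <;>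
        exact hmn (congrArg Prod.fst h)
    have hbig := hindep.indepFun_finset {(m, 0), (m, 1), (m, 2)} {(n, 0), (n, 1), (n, 2)} hd hfm
    let g : (k : ℕ) → ((Π _i : ({(k, 0), (k, 1), (k, 2)} : Finset (ℕ × Fin 3)), ℕ) → ℝ) :=
      fun k v => ((v ⟨(k, 0), by simp⟩ : ℝ) + (v ⟨(k, 2), by simp⟩ : ℝ)) *
        ((v ⟨(k, 1), by simp⟩ : ℝ) + (v ⟨(k, 2), by simp⟩ : ℝ))
    have hgm : ∀ k, Measurable (g k) := by
      intro k
      apply Measurable.mul <;> apply Measurable.add <;>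
        exact castm.comp (measurable_pi_apply _)
    have := hbig.comp (hgm m) (hgm n)
    exact this
  -- integrability and mean of P 0
  have iX1X2 : IndepFun (fun ω => (X1 0 ω : ℝ)) (fun ω => (X2 0 ω : ℝ)) μ :=
    (hindep.indepFun (neq 0 0 0 1 (Or.inr (by decide)))).comp castm castm
  have iX1Y : IndepFun (fun ω => (X1 0 ω : ℝ)) (fun ω => (Y 0 ω : ℝ)) μ :=
    (hindep.indepFun (neq 0 0 0 2 (Or.inr (by decide)))).comp castm castm
  have iX2Y : IndepFun (fun ω => (X2 0 ω : ℝ)) (fun ω => (Y 0 ω : ℝ)) μ :=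
    (hindep.indepFun (neq 0 0 1 2 (Or.inr (by decide)))).comp castm castm
  have int12 : Integrable (fun ω => (X1 0 ω : ℝ) * (X2 0 ω : ℝ)) μ :=
    iX1X2.integrable_mul (mX1 0).1.1 (mX2 0).1.1
  have int1Y : Integrable (fun ω => (X1 0 ω : ℝ) * (Y 0 ω : ℝ)) μ :=
    iX1Y.integrable_mul (mX1 0).1.1 (mY 0).1.1
  have int2Y : Integrable (fun ω => (X2 0 ω : ℝ) * (Y 0 ω : ℝ)) μ :=
    iX2Y.integrable_mul (mX2 0).1.1 (mY 0).1.1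
  have hPsum : P 0 = fun ω => (X1 0 ω : ℝ) * (X2 0 ω : ℝ) + (X1 0 ω : ℝ) * (Y 0 ω : ℝ)
      + (X2 0 ω : ℝ) * (Y 0 ω : ℝ) + (Y 0 ω : ℝ) ^ 2 := by
    funext ω
    show ((X1 0 ω : ℝ) + (Y 0 ω : ℝ)) * ((X2 0 ω : ℝ) + (Y 0 ω : ℝ)) = _
    ring
  have intP : Integrable (P 0) μ := by
    rw [hPsum]
    exact ((int12.add int1Y).add int2Y).add (mY 0).2.1
  have eP : ∫ ω, P 0 ω ∂μ = (ra : ℝ) * rb + (ra : ℝ) * rc + (rb : ℝ) * rc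
      + ((rc : ℝ) ^ 2 + (rc : ℝ)) := by
    rw [hPsum]
    have intA : Integrable (fun ω => (X1 0 ω : ℝ) * (X2 0 ω : ℝ)
        + (X1 0 ω : ℝ) * (Y 0 ω : ℝ)) μ := int12.add int1Y
    have intB : Integrable (fun ω => (X1 0 ω : ℝ) * (X2 0 ω : ℝ)
        + (X1 0 ω : ℝ) * (Y 0 ω : ℝ) + (X2 0 ω : ℝ) * (Y 0 ω : ℝ)) μ := intA.add int2Y
    rw [integral_add intB (mY 0).2.1, integral_add intA int2Y, integral_add int12 int1Y]
    rw [(by have := iX1X2.integral_mul_eq_mul_integral (mX1 0).1.1.1 (mX2 0).1.1.1; exact this :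
        ∫ ω, (X1 0 ω : ℝ) * (X2 0 ω : ℝ) ∂μ = (∫ ω, (X1 0 ω : ℝ) ∂μ) * ∫ ω, (X2 0 ω : ℝ) ∂μ),
      (by have := iX1Y.integral_mul_eq_mul_integral (mX1 0).1.1.1 (mY 0).1.1.1; exact this :
        ∫ ω, (X1 0 ω : ℝ) * (Y 0 ω : ℝ) ∂μ = (∫ ω, (X1 0 ω : ℝ) ∂μ) * ∫ ω, (Y 0 ω : ℝ) ∂μ),
      (by have := iX2Y.integral_mul_eq_mul_integral (mX2 0).1.1.1 (mY 0).1.1.1; exact this :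
        ∫ ω, (X2 0 ω : ℝ) * (Y 0 ω : ℝ) ∂μ = (∫ ω, (X2 0 ω : ℝ) ∂μ) * ∫ ω, (Y 0 ω : ℝ) ∂μ),
      (mX1 0).1.2, (mX2 0).1.2, (mY 0).1.2, (mY 0).2.2]
  have sllnP : ∀ᵐ ω ∂μ, Filter.Tendsto (fun M : ℕ => (∑ m ∈ range M, P m ω) / M)
      atTop (nhds ((ra : ℝ) * rb + (ra : ℝ) * rc + (rb : ℝ) * rc
        + ((rc : ℝ) ^ 2 + (rc : ℝ)))) := by
    have h := strong_law_ae_real P intP pairP identP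
    rw [eP] at h
    exact h
  -- numeric values of the limits
  have hE1 : (ra : ℝ) + rc = lam * p1 := by rw [hra, hrc]; ring
  have hE2 : (rb : ℝ) + rc = lam * p2 := by rw [hrb, hrc]; ring
  have hEP : (ra : ℝ) * rb + (ra : ℝ) * rc + (rb : ℝ) * rc + ((rc : ℝ) ^ 2 + (rc : ℝ))
      = (lam * p1) * (lam * p2) + lam * p1 * p2 := by rw [hra, hrb, hrc]; ring
  rw [hE1] at slln1
  rw [hE2] at slln2
  rw [hEP] at sllnP
  -- the ratio M/(M-1) tends to 1
  have h_ratio : Filter.Tendsto (fun M : ℕ => (M : ℝ) / ((M : ℝ) - 1)) atTop (nhds 1) := by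
    have h0 : Filter.Tendsto (fun M : ℕ => ((M : ℝ) - 1)) atTop atTop := by
      have := tendsto_natCast_atTop_atTop (R := ℝ)
      exact tendsto_atTop_add_const_right _ (-1) this
    have h1 : Filter.Tendsto (fun M : ℕ => ((M : ℝ) - 1)⁻¹) atTop (nhds 0) :=
      h0.inv_tendsto_atTop
    have h2 : Filter.Tendsto (fun M : ℕ => 1 + ((M : ℝ) - 1)⁻¹) atTop (nhds (1 + 0)) :=
      tendsto_const_nhds.add h1
    rw [add_zero] at h2
    apply h2.congr'
    filter_upwards [eventually_ge_atTop 2] with M hM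
    have hM2 : (2 : ℝ) ≤ (M : ℝ) := by exact_mod_cast hM
    have hM1 : (M : ℝ) - 1 ≠ 0 := by linarith
    field_simp
    ring
  -- the sample covariance identity
  have scov_eq : ∀ (ω : Ω) (M : ℕ), 2 ≤ M →
      ((M : ℝ) / ((M : ℝ) - 1)) * ((∑ m ∈ range M, P m ω) / M
        - ((∑ m ∈ range M, R1 m ω) / M) * ((∑ m ∈ range M, R2 m ω) / M))
      = sCov X1 X2 Y M ω := by
    intro ω M hM
    have hM2 : (2 : ℝ) ≤ (M : ℝ) := by exact_mod_cast hM
    have hM0 : (M : ℝ) ≠ 0 := by linarith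
    have hM1 : (M : ℝ) - 1 ≠ 0 := by linarith
    show ((M : ℝ) / ((M : ℝ) - 1)) * ((∑ m ∈ range M,
        ((X1 m ω : ℝ) + (Y m ω : ℝ)) * ((X2 m ω : ℝ) + (Y m ω : ℝ))) / M
        - ((∑ m ∈ range M, ((X1 m ω : ℝ) + (Y m ω : ℝ))) / M)
          * ((∑ m ∈ range M, ((X2 m ω : ℝ) + (Y m ω : ℝ))) / M)) = _
    simp only [sCov, rbar]
    set s1 := ∑ m ∈ range M, ((X1 m ω : ℝ) + (Y m ω : ℝ)) with hs1
    set s2 := ∑ m ∈ range M, ((X2 m ω : ℝ) + (Y m ω : ℝ)) with hs2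
    have expand : ∑ m ∈ range M,
        (((X1 m ω : ℝ) + (Y m ω : ℝ)) - s1 / M) * (((X2 m ω : ℝ) + (Y m ω : ℝ)) - s2 / M)
        = (∑ m ∈ range M, ((X1 m ω : ℝ) + (Y m ω : ℝ)) * ((X2 m ω : ℝ) + (Y m ω : ℝ)))
          - s1 * s2 / M := by
      have hterm : ∀ m ∈ range M,
          (((X1 m ω : ℝ) + (Y m ω : ℝ)) - s1 / M) * (((X2 m ω : ℝ) + (Y m ω : ℝ)) - s2 / M)
          = ((X1 m ω : ℝ) + (Y m ω : ℝ)) * ((X2 m ω : ℝ) + (Y m ω : ℝ))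
            - (s1 / M) * ((X2 m ω : ℝ) + (Y m ω : ℝ))
            - (s2 / M) * ((X1 m ω : ℝ) + (Y m ω : ℝ)) + (s1 / M) * (s2 / M) :=
        fun m _ => by ring
      rw [Finset.sum_congr rfl hterm]
      simp only [Finset.sum_add_distrib, Finset.sum_sub_distrib, ← Finset.mul_sum,
        Finset.sum_const, Finset.card_range, nsmul_eq_mul, ← hs1, ← hs2]
      field_simp
      ring
    rw [expand]
    field_simp
  -- almost-everywhere convergence of all three statistics
  have key : ∀ᵐ ω ∂μ,
      Filter.Tendsto (fun M : ℕ => rbar X1 Y M ω) atTop (nhds (lam * p1)) ∧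
      Filter.Tendsto (fun M : ℕ => rbar X2 Y M ω) atTop (nhds (lam * p2)) ∧
      Filter.Tendsto (fun M : ℕ => sCov X1 X2 Y M ω) atTop (nhds (lam * p1 * p2)) := by
    filter_upwards [slln1, slln2, sllnP] with ω h1 h2 hp
    refine ⟨h1, h2, ?_⟩
    have hcomb : Filter.Tendsto (fun M : ℕ => ((M : ℝ) / ((M : ℝ) - 1)) *
        ((∑ m ∈ range M, P m ω) / M
          - ((∑ m ∈ range M, R1 m ω) / M) * ((∑ m ∈ range M, R2 m ω) / M)))
        atTop (nhds (1 * ((lam * p1) * (lam * p2) + lam * p1 * p2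
          - (lam * p1) * (lam * p2)))) :=
      h_ratio.mul (hp.sub (h1.mul h2))
    have hval : (1 : ℝ) * ((lam * p1) * (lam * p2) + lam * p1 * p2
        - (lam * p1) * (lam * p2)) = lam * p1 * p2 := by ring
    rw [hval] at hcomb
    apply hcomb.congr'
    filter_upwards [eventually_ge_atTop 2] with M hM
    exact scov_eq ω M hM
  -- measurability of the statistics
  have mrbar1 : ∀ M, Measurable (fun ω => rbar X1 Y M ω) := by
    intro M
    simp only [rbar]
    exact (Finset.measurable_sum _ (fun m _ =>
      (castm.comp (hmX1 m)).add (castm.comp (hmY m)))).div_const _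
  have mrbar2 : ∀ M, Measurable (fun ω => rbar X2 Y M ω) := by
    intro M
    simp only [rbar]
    exact (Finset.measurable_sum _ (fun m _ =>
      (castm.comp (hmX2 m)).add (castm.comp (hmY m)))).div_const _
  have msCov : ∀ M, Measurable (fun ω => sCov X1 X2 Y M ω) := by
    intro M
    simp only [sCov, rbar]
    refine Measurable.div_const (Finset.measurable_sum _ (fun m _ => ?_)) _
    exact (((castm.comp (hmX1 m)).add (castm.comp (hmY m))).sub
        ((Finset.measurable_sum _ (fun k _ =>
          (castm.comp (hmX1 k)).add (castm.comp (hmY k)))).div_const _)).mul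
      (((castm.comp (hmX2 m)).add (castm.comp (hmY m))).sub
        ((Finset.measurable_sum _ (fun k _ =>
          (castm.comp (hmX2 k)).add (castm.comp (hmY k)))).div_const _))
  have hlp1 : lam * p1 ≠ 0 := ne_of_gt (mul_pos hlam hp1a)
  have hlp2 : lam * p2 ≠ 0 := ne_of_gt (mul_pos hlam hp2a)
  have hlpp : lam * p1 * p2 ≠ 0 := ne_of_gt (mul_pos (mul_pos hlam hp1a) hp2a)
  refine ⟨?_, ?_, ?_⟩
  · apply tendstoInMeasure_of_tendsto_ae
      (fun M => ((msCov M).div (mrbar2 M)).aestronglyMeasurable)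
    filter_upwards [key] with ω ⟨k1, k2, k3⟩
    have h := k3.div k2 hlp2
    rw [show lam * p1 * p2 / (lam * p2) = p1 by rw [div_eq_iff hlp2]; ring] at h
    exact h
  · apply tendstoInMeasure_of_tendsto_ae
      (fun M => ((msCov M).div (mrbar1 M)).aestronglyMeasurable)
    filter_upwards [key] with ω ⟨k1, k2, k3⟩
    have h := k3.div k1 hlp1
    rw [show lam * p1 * p2 / (lam * p1) = p2 by rw [div_eq_iff hlp1]; ring] at h
    exact h
  · apply tendstoInMeasure_of_tendsto_ae
      (fun M => (((mrbar1 M).mul (mrbar2 M)).div (msCov M)).aestronglyMeasurable)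
    filter_upwards [key] with ω ⟨k1, k2, k3⟩
    have h := (k1.mul k2).div k3 hlpp
    rw [show lam * p1 * (lam * p2) / (lam * p1 * p2) = lam by rw [div_eq_iff hlpp]; ring] at h
    exact h
end

section
/- In the bivariate Poisson sampling model, as M → ∞, Var(r̄₁·r̄₂) = λ³p₁p₂(p₁ + p₂ + 2p₁p₂)/M + O(1/M²); that is, the function M ↦ Var(r̄₁·r̄₂) − λ³p₁p₂(p₁+p₂+2p₁p₂)/M is O(M^{−2}) as M → ∞. -/
open MeasureTheory ProbabilityTheory Filter Finset Asymptotics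

open scoped NNReal Nat ENNReal
open Real

lemma cast_descF (j n : ℕ) : (n.descFactorial j : ℝ) = ∏ i ∈ Finset.range j, ((n:ℝ) - i) := by
  induction j with
  | zero => simp
  | succ j ih =>
    rw [Finset.prod_range_succ, ← ih, Nat.descFactorial_succ]
    rcases lt_or_ge n j with h | h
    · rw [Nat.descFactorial_eq_zero_iff_lt.2 h]; simp
    · push_cast [Nat.cast_sub h]; ring

lemma descF_hasSum (r : ℝ≥0) (j : ℕ) :
    HasSum (fun n : ℕ => (n.descFactorial j : ℝ) * poissonPMFReal r n) ((r:ℝ)^j) := by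
  have hz : ∀ i < j, (i.descFactorial j : ℝ) * poissonPMFReal r i = 0 := by
    intro i hi
    rw [Nat.descFactorial_eq_zero_iff_lt.2 hi]; simp
  rw [← hasSum_nat_add_iff' j]
  have hsum0 : ∑ i ∈ Finset.range j, (i.descFactorial j : ℝ) * poissonPMFReal r i = 0 :=
    Finset.sum_eq_zero (fun i hi => hz i (Finset.mem_range.1 hi))
  rw [hsum0, sub_zero]
  have key : ∀ m : ℕ, ((m + j).descFactorial j : ℝ) * poissonPMFReal r (m + j)
      = (r:ℝ)^j * poissonPMFReal r m := by
    intro m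
    have h1 : (m !) * ((m+j).descFactorial j) = ((m+j)!) := by
      have := Nat.factorial_mul_descFactorial (n := m + j) (k := j) (Nat.le_add_left j m)
      simpa using this
    unfold poissonPMFReal
    have hm : (0:ℝ) < (m !) := by positivity
    have hmj : (0:ℝ) < (((m+j)!) : ℝ) := by positivity
    have h1' : ((m !) : ℝ) * ((m+j).descFactorial j : ℝ) = (((m+j)!) : ℝ) := by
      exact_mod_cast congrArg (Nat.cast : ℕ → ℝ) h1
    field_simp
    rw [pow_add]
    rw [← h1']; ring
  simp only [key]
  simpa [poissonPMFReal] using (poissonPMFRealSum r).mul_left ((r:ℝ)^j)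

lemma poisson_pow (r : ℝ≥0) (k : ℕ) (v : ℝ)
    (h : HasSum (fun n : ℕ => (n:ℝ)^k * poissonPMFReal r n) v) :
    Integrable (fun n : ℕ => (n:ℝ)^k) (poissonMeasure r) ∧
      ∫ n : ℕ, (n:ℝ)^k ∂(poissonMeasure r) = v := by
  have hnn : ∀ n : ℕ, 0 ≤ (n:ℝ)^k * poissonPMFReal r n :=
    fun n => mul_nonneg (by positivity) poissonPMFReal_nonneg
  have hsing : ∀ n : ℕ, (poissonMeasure r) {n} = ENNReal.ofReal (poissonPMFReal r n) := by
    intro n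
    rw [poissonMeasure_singleton]
    rfl
  have hint : Integrable (fun n : ℕ => (n:ℝ)^k) (poissonMeasure r) := by
    constructor
    · exact (measurable_from_top).aestronglyMeasurable
    · rw [HasFiniteIntegral, lintegral_countable']
      have : ∀ n : ℕ, ‖(n:ℝ)^k‖ₑ * (poissonMeasure r) {n}
          = ENNReal.ofReal ((n:ℝ)^k * poissonPMFReal r n) := by
        intro n
        rw [hsing n, ENNReal.ofReal_mul (by positivity)]
        congr 1
        simp [← ENNReal.ofReal_coe_nnreal, Real.enorm_eq_ofReal (by positivity : (0:ℝ) ≤ (n:ℝ)^k)]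
      rw [tsum_congr this, ← ENNReal.ofReal_tsum_of_nonneg hnn h.summable]
      exact ENNReal.ofReal_lt_top
  refine ⟨hint, ?_⟩
  rw [poissonMeasure, integral_sum_measure hint]
  have : ∀ n : ℕ, ∫ x : ℕ, (x:ℝ)^k ∂(ENNReal.ofReal (rexp (-r) * r^n / n !) • Measure.dirac n)
      = (n:ℝ)^k * poissonPMFReal r n := by
    intro n
    rw [integral_smul_measure, integral_dirac, ENNReal.toReal_ofReal (by positivity), smul_eq_mul,
      mul_comm]
    rfl
  rw [tsum_congr this, h.tsum_eq]

/-- Moments of the Poisson distribution, `k ≤ 4`. -/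
noncomputable def pmVal (x : ℝ) : ℕ → ℝ
  | 0 => 1
  | 1 => x
  | 2 => x + x^2
  | 3 => x + 3*x^2 + x^3
  | 4 => x + 7*x^2 + 6*x^3 + x^4
  | _ => 0

lemma poisson_moment (r : ℝ≥0) (k : ℕ) (hk : k ≤ 4) :
    Integrable (fun n : ℕ => (n:ℝ)^k) (poissonMeasure r) ∧
      ∫ n : ℕ, (n:ℝ)^k ∂(poissonMeasure r) = pmVal (r:ℝ) k := by
  have h1 := descF_hasSum r 1
  have h2 := descF_hasSum r 2
  have h3 := descF_hasSum r 3
  have h4 := descF_hasSum r 4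
  interval_cases k
  · constructor
    · simpa using (integrable_const (1:ℝ) (μ := poissonMeasure r))
    · simp [pmVal]
  · refine poisson_pow r 1 _ ?_
    have he : (fun n : ℕ => (n:ℝ)^1 * poissonPMFReal r n)
        = fun n : ℕ => (n.descFactorial 1 : ℝ) * poissonPMFReal r n := by
      funext n; rw [cast_descF]; simp
    rw [pmVal, he]
    simpa using h1
  · refine poisson_pow r 2 _ ?_
    have he : (fun n : ℕ => (n:ℝ)^2 * poissonPMFReal r n)
        = fun n : ℕ => (n.descFactorial 2 : ℝ) * poissonPMFReal r n
            + (n.descFactorial 1 : ℝ) * poissonPMFReal r n := by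
      funext n; rw [cast_descF, cast_descF]; simp [Finset.prod_range_succ]; ring
    rw [pmVal, he]
    have := h2.add h1
    convert this using 1; ring
  · refine poisson_pow r 3 _ ?_
    have he : (fun n : ℕ => (n:ℝ)^3 * poissonPMFReal r n)
        = fun n : ℕ => ((n.descFactorial 3 : ℝ) * poissonPMFReal r n
            + 3 * ((n.descFactorial 2 : ℝ) * poissonPMFReal r n))
            + (n.descFactorial 1 : ℝ) * poissonPMFReal r n := by
      funext n; rw [cast_descF, cast_descF, cast_descF]; simp [Finset.prod_range_succ]; ring
    rw [pmVal, he]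
    have := (h3.add (h2.mul_left 3)).add h1
    convert this using 1; ring
  · refine poisson_pow r 4 _ ?_
    have he : (fun n : ℕ => (n:ℝ)^4 * poissonPMFReal r n)
        = fun n : ℕ => (((n.descFactorial 4 : ℝ) * poissonPMFReal r n
            + 6 * ((n.descFactorial 3 : ℝ) * poissonPMFReal r n))
            + 7 * ((n.descFactorial 2 : ℝ) * poissonPMFReal r n))
            + (n.descFactorial 1 : ℝ) * poissonPMFReal r n := by
      funext n; rw [cast_descF, cast_descF, cast_descF, cast_descF]
      simp [Finset.prod_range_succ]; ring
    rw [pmVal, he]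
    have := ((h4.add (h3.mul_left 6)).add (h2.mul_left 7)).add h1
    convert this using 1; ring

section AuxRV

variable {Ω : Type*} [MeasurableSpace Ω] {μ : Measure Ω}

lemma rv_moment {V : Ω → ℕ} (hm : Measurable V)
    {r : ℝ≥0} (hd : μ.map V = poissonMeasure r) {k : ℕ} (hk : k ≤ 4) :
    Integrable (fun ω => (V ω:ℝ)^k) μ ∧ ∫ ω, (V ω:ℝ)^k ∂μ = pmVal (r:ℝ) k := by
  have hpm := poisson_moment r k hk
  have hg : Measurable (fun n : ℕ => (n:ℝ)^k) := measurable_from_top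
  constructor
  · exact (integrable_map_measure hg.aestronglyMeasurable hm.aemeasurable).1
      (by rw [hd]; exact hpm.1)
  · rw [← hpm.2, ← hd, integral_map hm.aemeasurable hg.aestronglyMeasurable]

lemma indep_mom {S Z : Ω → ℝ} (h : IndepFun S Z μ) (i j : ℕ)
    (hi : Integrable (fun ω => S ω ^ i) μ) (hj : Integrable (fun ω => Z ω ^ j) μ) :
    Integrable (fun ω => S ω ^ i * Z ω ^ j) μ ∧
      ∫ ω, S ω ^ i * Z ω ^ j ∂μ = (∫ ω, S ω ^ i ∂μ) * (∫ ω, Z ω ^ j ∂μ) := by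
  have h2 : IndepFun (fun ω => S ω ^ i) (fun ω => Z ω ^ j) μ :=
    h.comp (measurable_id.pow_const i) (measurable_id.pow_const j)
  exact ⟨h2.integrable_mul hi hj, h2.integral_mul_eq_mul_integral hi.aestronglyMeasurable hj.aestronglyMeasurable⟩

lemma sum_moment [IsProbabilityMeasure μ] {g : ℕ → Ω → ℕ} (hmg : ∀ m, Measurable (g m))
    {r : ℝ≥0} (hdg : ∀ m, μ.map (g m) = poissonMeasure r)
    (hind : ∀ M, IndepFun (fun ω => ∑ m ∈ Finset.range M, (g m ω:ℝ))
      (fun ω => (g M ω:ℝ)) μ)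
    (M : ℕ) : ∀ k, k ≤ 4 →
    Integrable (fun ω => (∑ m ∈ Finset.range M, (g m ω:ℝ))^k) μ ∧
      ∫ ω, (∑ m ∈ Finset.range M, (g m ω:ℝ))^k ∂μ = pmVal ((M:ℝ)*(r:ℝ)) k := by
  induction M with
  | zero =>
    intro k hk
    interval_cases k <;>
      simp [pmVal, integrable_const (1:ℝ) (μ := μ)]
  | succ M ih =>
    intro k hk
    set S : Ω → ℝ := fun ω => ∑ m ∈ Finset.range M, (g m ω:ℝ) with hS
    set Z : Ω → ℝ := fun ω => (g M ω:ℝ) with hZ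
    have hT : ∀ i ≤ 4, ∀ j ≤ 4, Integrable (fun ω => S ω ^ i * Z ω ^ j) μ ∧
        ∫ ω, S ω ^ i * Z ω ^ j ∂μ = pmVal ((M:ℝ)*(r:ℝ)) i * pmVal (r:ℝ) j := by
      intro i hi j hj
      have h1 := ih i hi
      have h2 := rv_moment (hmg M) (hdg M) hj
      have := indep_mom (hind M) i j h1.1 h2.1
      exact ⟨this.1, by rw [this.2, h1.2, h2.2]⟩
    have hfe : (fun ω => (∑ m ∈ Finset.range (M+1), (g m ω:ℝ))^k)
        = fun ω => ∑ j ∈ Finset.range (k+1), S ω ^ j * Z ω ^ (k-j) * (k.choose j : ℝ) := by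
      funext ω
      rw [Finset.sum_range_succ]
      exact add_pow _ _ _
    rw [hfe]
    constructor
    · refine integrable_finset_sum _ (fun j hj => ?_)
      have hj4 : j ≤ 4 := le_trans (Nat.lt_succ_iff.1 (Finset.mem_range.1 hj)) hk
      exact ((hT j hj4 (k-j) (le_trans (Nat.sub_le _ _) hk)).1).mul_const _
    · rw [integral_finset_sum _ (fun j hj => by
        have hj4 : j ≤ 4 := le_trans (Nat.lt_succ_iff.1 (Finset.mem_range.1 hj)) hk
        exact ((hT j hj4 (k-j) (le_trans (Nat.sub_le _ _) hk)).1).mul_const _)]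
      have hsc : ∀ j ∈ Finset.range (k+1),
          ∫ ω, S ω ^ j * Z ω ^ (k-j) * (k.choose j : ℝ) ∂μ
          = pmVal ((M:ℝ)*(r:ℝ)) j * pmVal (r:ℝ) (k-j) * (k.choose j : ℝ) := by
        intro j hj
        have hj4 : j ≤ 4 := le_trans (Nat.lt_succ_iff.1 (Finset.mem_range.1 hj)) hk
        rw [integral_mul_const, (hT j hj4 (k-j) (le_trans (Nat.sub_le _ _) hk)).2]
      rw [Finset.sum_congr rfl hsc]
      interval_cases k <;>
        · simp [Finset.sum_range_succ, pmVal, Nat.choose]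
          try push_cast
          try ring
  
end AuxRV

section Indep

variable {Ω : Type*} [MeasurableSpace Ω] {μ : Measure Ω} {F : ℕ × Fin 3 → Ω → ℕ}

lemma comp_indep_blocks {Ω : Type*} [MeasurableSpace Ω] {μ : Measure Ω}
    {F : ℕ × Fin 3 → Ω → ℕ}
    (hindep : iIndepFun F μ)
    (hFm : ∀ q, Measurable (F q)) {S T : Finset (ℕ × Fin 3)} (hST : Disjoint S T)
    {β γ : Type*} [MeasurableSpace β] [MeasurableSpace γ]
    {pf : ((q : S) → ℕ) → β} {pg : ((q : T) → ℕ) → γ}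
    (hpf : Measurable pf) (hpg : Measurable pg) :
    IndepFun (fun ω => pf (fun q => F q ω)) (fun ω => pg (fun q => F q ω)) μ :=
  (hindep.indepFun_finset S T hST hFm).comp hpf hpg

lemma measurable_sum_coords (S : Finset (ℕ × Fin 3)) :
    Measurable (fun t : (q : S) → ℕ => ∑ q, (t q : ℝ)) :=
  Finset.measurable_sum _ (fun q _ => measurable_from_top.comp (measurable_pi_apply q))

lemma measurable_if_sum_coords (S : Finset (ℕ × Fin 3)) (i : Fin 3) :
    Measurable (fun t : (q : S) → ℕ =>
      ∑ q : S, if (q : ℕ × Fin 3).2 = i then (t q : ℝ) else 0) := by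
  refine Finset.measurable_sum _ (fun q _ => ?_)
  by_cases h : (q : ℕ × Fin 3).2 = i
  · simp only [h, if_true]
    exact measurable_from_top.comp (measurable_pi_apply q)
  · simp only [h, if_false]
    exact measurable_const

lemma seq_indep (hindep : iIndepFun F μ)
    (hFm : ∀ q, Measurable (F q)) (i : Fin 3) (M : ℕ) :
    IndepFun (fun ω => ∑ m ∈ Finset.range M, (F (m, i) ω : ℝ))
      (fun ω => (F (M, i) ω : ℝ)) μ := by
  classical
  set S : Finset (ℕ × Fin 3) := (Finset.range M).image (fun m => (m, i)) with hSdef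
  set T : Finset (ℕ × Fin 3) := {(M, i)} with hTdef
  have hST : Disjoint S T := by
    simp only [hSdef, hTdef, Finset.disjoint_singleton_right, Finset.mem_image, Finset.mem_range,
      Prod.mk.injEq, not_exists, not_and]
    intro m hm
    intro h
    omega
  have hmem : (M, i) ∈ T := Finset.mem_singleton_self _
  have h := comp_indep_blocks hindep hFm hST
    (pf := fun t : (q : S) → ℕ => ∑ q, (t q : ℝ))
    (pg := fun t : (q : T) → ℕ => (t ⟨(M, i), hmem⟩ : ℝ))
    (measurable_sum_coords S)
    (measurable_from_top.comp (measurable_pi_apply _))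
  have e1 : (fun ω => ∑ q : S, (F (q : ℕ × Fin 3) ω : ℝ))
      = (fun ω => ∑ m ∈ Finset.range M, (F (m, i) ω : ℝ)) := by
    funext ω
    rw [Finset.sum_coe_sort S (fun x => (F x ω : ℝ))]
    exact Finset.sum_image (fun a _ b _ h => (Prod.mk.injEq _ _ _ _ ▸ h).1)
  rw [← e1]
  exact h

lemma two_sum_indep (hindep : iIndepFun F μ)
    (hFm : ∀ q, Measurable (F q)) {i j : Fin 3} (hij : i ≠ j) (M : ℕ) :
    IndepFun (fun ω => ∑ m ∈ Finset.range M, (F (m, i) ω : ℝ))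
      (fun ω => ∑ m ∈ Finset.range M, (F (m, j) ω : ℝ)) μ := by
  classical
  set S : Finset (ℕ × Fin 3) := (Finset.range M).image (fun m => (m, i)) with hSdef
  set T : Finset (ℕ × Fin 3) := (Finset.range M).image (fun m => (m, j)) with hTdef
  have hST : Disjoint S T := by
    rw [Finset.disjoint_left]
    rintro ⟨m, l⟩ hs ht
    simp only [hSdef, hTdef, Finset.mem_image, Prod.mk.injEq] at hs ht
    obtain ⟨_, _, _, h1⟩ := hs
    obtain ⟨_, _, _, h2⟩ := ht
    exact hij (h1.trans h2.symm)
  have h := comp_indep_blocks hindep hFm hST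
    (pf := fun t : (q : S) → ℕ => ∑ q, (t q : ℝ))
    (pg := fun t : (q : T) → ℕ => ∑ q, (t q : ℝ))
    (measurable_sum_coords S) (measurable_sum_coords T)
  have e1 : ∀ (l : Fin 3) (U : Finset (ℕ × Fin 3)) (hU : U = (Finset.range M).image (fun m => (m, l))),
      (fun ω => ∑ q : U, (F (q : ℕ × Fin 3) ω : ℝ))
      = (fun ω => ∑ m ∈ Finset.range M, (F (m, l) ω : ℝ)) := by
    intro l U hU
    funext ω
    rw [Finset.sum_coe_sort U (fun x => (F x ω : ℝ)), hU]
    exact Finset.sum_image (fun a _ b _ h => (Prod.mk.injEq _ _ _ _ ▸ h).1)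
  rw [← e1 i S hSdef, ← e1 j T hTdef]
  exact h

end Indep

lemma pair_indep {Ω : Type*} [MeasurableSpace Ω] {μ : Measure Ω}
    {F : ℕ × Fin 3 → Ω → ℕ}
    (hindep : iIndepFun F μ)
    (hFm : ∀ q, Measurable (F q)) (M : ℕ) :
    IndepFun (fun ω => ((∑ m ∈ Finset.range M, (F (m, 0) ω : ℝ)),
        (∑ m ∈ Finset.range M, (F (m, 1) ω : ℝ))))
      (fun ω => ∑ m ∈ Finset.range M, (F (m, 2) ω : ℝ)) μ := by
  classical
  set S0 : Finset (ℕ × Fin 3) := (Finset.range M).image (fun m => (m, (0 : Fin 3))) with hS0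
  set S1 : Finset (ℕ × Fin 3) := (Finset.range M).image (fun m => (m, (1 : Fin 3))) with hS1
  set S : Finset (ℕ × Fin 3) := S0 ∪ S1 with hSdef
  set T : Finset (ℕ × Fin 3) := (Finset.range M).image (fun m => (m, (2 : Fin 3))) with hTdef
  have hdisj : ∀ (i j : Fin 3), i ≠ j → Disjoint ((Finset.range M).image (fun m => (m, i)))
      ((Finset.range M).image (fun m => (m, j))) := by
    intro i j hij
    rw [Finset.disjoint_left]
    rintro ⟨m, l⟩ hs ht
    simp only [Finset.mem_image, Prod.mk.injEq] at hs ht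
    obtain ⟨_, _, _, h1⟩ := hs
    obtain ⟨_, _, _, h2⟩ := ht
    exact hij (h1.trans h2.symm)
  have hST : Disjoint S T := by
    rw [hSdef, Finset.disjoint_union_left]
    exact ⟨hdisj 0 2 (by decide), hdisj 1 2 (by decide)⟩
  have h := comp_indep_blocks hindep hFm hST
    (pf := fun t : (q : S) → ℕ =>
      ((∑ q : S, if (q : ℕ × Fin 3).2 = 0 then (t q : ℝ) else 0),
       (∑ q : S, if (q : ℕ × Fin 3).2 = 1 then (t q : ℝ) else 0)))
    (pg := fun t : (q : T) → ℕ => ∑ q, (t q : ℝ))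
    (((measurable_if_sum_coords S 0).prodMk (measurable_if_sum_coords S 1)))
    (measurable_sum_coords T)
  have himg : ∀ (i : Fin 3) (ω : Ω) (g : ℕ × Fin 3 → ℝ),
      ∑ x ∈ (Finset.range M).image (fun m => (m, i)), g x
        = ∑ m ∈ Finset.range M, g (m, i) :=
    fun i ω g => Finset.sum_image (fun a _ b _ h => (Prod.mk.injEq _ _ _ _ ▸ h).1)
  have e1 : (fun ω => ((∑ q : S, if (q : ℕ × Fin 3).2 = 0 then (F (q : ℕ × Fin 3) ω : ℝ) else 0),
        (∑ q : S, if (q : ℕ × Fin 3).2 = 1 then (F (q : ℕ × Fin 3) ω : ℝ) else 0)))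
      = (fun ω => ((∑ m ∈ Finset.range M, (F (m, 0) ω : ℝ)),
        (∑ m ∈ Finset.range M, (F (m, 1) ω : ℝ)))) := by
    funext ω
    have hsplit : ∀ i : Fin 3, ∑ q : S, (if (q : ℕ × Fin 3).2 = i then (F (q : ℕ × Fin 3) ω : ℝ) else 0)
        = (∑ x ∈ S0, (if x.2 = i then (F x ω : ℝ) else 0))
          + ∑ x ∈ S1, (if x.2 = i then (F x ω : ℝ) else 0) := by
      intro i
      rw [Finset.sum_coe_sort S (fun x => if x.2 = i then (F x ω : ℝ) else 0), hSdef,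
        Finset.sum_union (hdisj 0 1 (by decide))]
    have h0 : ∀ (i j : Fin 3), ∑ x ∈ (Finset.range M).image (fun m => (m, j)),
        (if x.2 = i then (F x ω : ℝ) else 0)
        = if j = i then ∑ m ∈ Finset.range M, (F (m, j) ω : ℝ) else 0 := by
      intro i j
      rw [himg j ω]
      by_cases h : j = i
      · simp [h]
      · simp [h]
    ext <;> simp only
    · rw [hsplit 0, hS0, hS1, h0 0 0, h0 0 1]
      norm_num
    · rw [hsplit 1, hS0, hS1, h0 1 0, h0 1 1]
      norm_num
  have e2 : (fun ω => ∑ q : T, (F (q : ℕ × Fin 3) ω : ℝ))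
      = (fun ω => ∑ m ∈ Finset.range M, (F (m, 2) ω : ℝ)) := by
    funext ω
    rw [Finset.sum_coe_sort T (fun x => (F x ω : ℝ)), hTdef, himg 2 ω]
  rw [← e1, ← e2]
  exact h

lemma tri_moment {Ω : Type*} [MeasurableSpace Ω] {μ : Measure Ω} [IsProbabilityMeasure μ]
    {F : ℕ × Fin 3 → Ω → ℕ}
    (hindep : iIndepFun F μ)
    (hFm : ∀ q, Measurable (F q)) {ra rb rc : ℝ≥0}
    (hd0 : ∀ m, μ.map (F (m, 0)) = poissonMeasure ra)
    (hd1 : ∀ m, μ.map (F (m, 1)) = poissonMeasure rb)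
    (hd2 : ∀ m, μ.map (F (m, 2)) = poissonMeasure rc)
    (M : ℕ) {i j k : ℕ} (hi : i ≤ 4) (hj : j ≤ 4) (hk : k ≤ 4) :
    Integrable (fun ω => (∑ m ∈ Finset.range M, (F (m, 0) ω : ℝ)) ^ i
        * (∑ m ∈ Finset.range M, (F (m, 1) ω : ℝ)) ^ j
        * (∑ m ∈ Finset.range M, (F (m, 2) ω : ℝ)) ^ k) μ ∧
      ∫ ω, (∑ m ∈ Finset.range M, (F (m, 0) ω : ℝ)) ^ i
        * (∑ m ∈ Finset.range M, (F (m, 1) ω : ℝ)) ^ j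
        * (∑ m ∈ Finset.range M, (F (m, 2) ω : ℝ)) ^ k ∂μ
      = pmVal ((M:ℝ)*(ra:ℝ)) i * pmVal ((M:ℝ)*(rb:ℝ)) j * pmVal ((M:ℝ)*(rc:ℝ)) k := by
  set A : Ω → ℝ := fun ω => ∑ m ∈ Finset.range M, (F (m, 0) ω : ℝ) with hAdef
  set B : Ω → ℝ := fun ω => ∑ m ∈ Finset.range M, (F (m, 1) ω : ℝ) with hBdef
  set C : Ω → ℝ := fun ω => ∑ m ∈ Finset.range M, (F (m, 2) ω : ℝ) with hCdef
  have hA := sum_moment (g := fun m => F (m, 0)) (fun m => hFm _) hd0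
    (fun N => seq_indep hindep hFm 0 N) M i hi
  have hB := sum_moment (g := fun m => F (m, 1)) (fun m => hFm _) hd1
    (fun N => seq_indep hindep hFm 1 N) M j hj
  have hC := sum_moment (g := fun m => F (m, 2)) (fun m => hFm _) hd2
    (fun N => seq_indep hindep hFm 2 N) M k hk
  have hAB : IndepFun A B μ := two_sum_indep hindep hFm (by decide) M
  have step1 := indep_mom hAB i j hA.1 hB.1
  have hP : IndepFun (fun ω => A ω ^ i * B ω ^ j) (fun ω => C ω ^ k) μ :=
    (pair_indep hindep hFm M).comp
      ((measurable_fst.pow_const i).mul (measurable_snd.pow_const j))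
      (measurable_id.pow_const k)
  constructor
  · exact hP.integrable_mul step1.1 hC.1
  · have h2 := hP.integral_mul_eq_mul_integral step1.1.aestronglyMeasurable hC.1.aestronglyMeasurable
    have h2' : ∫ ω, A ω ^ i * B ω ^ j * C ω ^ k ∂μ
        = (∫ ω, A ω ^ i * B ω ^ j ∂μ) * ∫ ω, C ω ^ k ∂μ := h2
    rw [h2', step1.2, hA.2, hB.2, hC.2]

/-- `Var(r̄₁·r̄₂) = λ³p₁p₂(p₁+p₂+2p₁p₂)/M + O(1/M²)` as `M → ∞`. -/
theorem var_prodMeans_asymptotic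
    {Ω : Type*} [MeasurableSpace Ω] (μ : Measure Ω) [IsProbabilityMeasure μ]
    (lam p1 p2 : ℝ) (hlam : 0 < lam)
    (hp1 : p1 ∈ Set.Ioo (0 : ℝ) 1) (hp2 : p2 ∈ Set.Ioo (0 : ℝ) 1)
    (X1 X2 Y : ℕ → Ω → ℕ)
    (hmX1 : ∀ m, Measurable (X1 m)) (hmX2 : ∀ m, Measurable (X2 m))
    (hmY : ∀ m, Measurable (Y m))
    (hindep : iIndepFun
      (fun (q : ℕ × Fin 3) => ![X1 q.1, X2 q.1, Y q.1] q.2) μ)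
    (hX1 : ∀ m, μ.map (X1 m) = poissonMeasure (lam * p1 * (1 - p2)).toNNReal)
    (hX2 : ∀ m, μ.map (X2 m) = poissonMeasure (lam * p2 * (1 - p1)).toNNReal)
    (hY : ∀ m, μ.map (Y m) = poissonMeasure (lam * p1 * p2).toNNReal) :
    (fun M : ℕ => variance (fun ω => rbar X1 Y M ω * rbar X2 Y M ω) μ -
        lam ^ 3 * p1 * p2 * (p1 + p2 + 2 * p1 * p2) / M)
      =O[atTop] (fun M : ℕ => 1 / (M : ℝ) ^ 2) := by
  obtain ⟨hp11, hp12⟩ := hp1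
  obtain ⟨hp21, hp22⟩ := hp2
  have hF : ∀ q : ℕ × Fin 3, (fun q : ℕ × Fin 3 => ![X1 q.1, X2 q.1, Y q.1] q.2) q
      = ![X1 q.1, X2 q.1, Y q.1] q.2 := fun _ => rfl
  set F : ℕ × Fin 3 → Ω → ℕ := fun q => ![X1 q.1, X2 q.1, Y q.1] q.2 with hFdef
  have hFm : ∀ q : ℕ × Fin 3, Measurable (F q) := by
    rintro ⟨m, i⟩
    fin_cases i
    · exact hmX1 m
    · exact hmX2 m
    · exact hmY m
  have hindep' : iIndepFun F μ := hindep
  have hd0 : ∀ m, μ.map (F (m, 0)) = poissonMeasure (lam * p1 * (1 - p2)).toNNReal :=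
    fun m => hX1 m
  have hd1 : ∀ m, μ.map (F (m, 1)) = poissonMeasure (lam * p2 * (1 - p1)).toNNReal :=
    fun m => hX2 m
  have hd2 : ∀ m, μ.map (F (m, 2)) = poissonMeasure (lam * p1 * p2).toNNReal :=
    fun m => hY m
  have hra : (((lam * p1 * (1 - p2)).toNNReal : ℝ≥0) : ℝ) = lam * p1 * (1 - p2) :=
    Real.coe_toNNReal _ (le_of_lt (mul_pos (mul_pos hlam hp11) (by linarith)))
  have hrb : (((lam * p2 * (1 - p1)).toNNReal : ℝ≥0) : ℝ) = lam * p2 * (1 - p1) :=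
    Real.coe_toNNReal _ (le_of_lt (mul_pos (mul_pos hlam hp21) (by linarith)))
  have hrc : (((lam * p1 * p2).toNNReal : ℝ≥0) : ℝ) = lam * p1 * p2 :=
    Real.coe_toNNReal _ (le_of_lt (mul_pos (mul_pos hlam hp11) hp21))
  have key : ∀ M : ℕ, (1:ℝ) ≤ (M:ℝ) →
      variance (fun ω => rbar X1 Y M ω * rbar X2 Y M ω) μ
      = (lam ^ 3 * p1 * p2 * (p1 + p2 + 2 * p1 * p2)) / (M:ℝ)
        + (6*(lam*p1*p2)^2 + 3*(lam*p2*(1-p1))*(lam*p1*p2) + 3*(lam*p1*(1-p2))*(lam*p1*p2)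
            + (lam*p1*(1-p2))*(lam*p2*(1-p1))) / (M:ℝ)^2
        + (lam*p1*p2) / (M:ℝ)^3 := by
    intro M hM1
    have hM0 : (0:ℝ) < (M:ℝ) := lt_of_lt_of_le one_pos hM1
    have hMne : (M:ℝ) ≠ 0 := ne_of_gt hM0
    have hmono := fun {i j k : ℕ} (hi : i ≤ 4) (hj : j ≤ 4) (hk : k ≤ 4) =>
      tri_moment hindep' hFm hd0 hd1 hd2 M hi hj hk
    have h110 := hmono (i:=1) (j:=1) (k:=0) (by norm_num) (by norm_num) (by norm_num)
    have h101 := hmono (i:=1) (j:=0) (k:=1) (by norm_num) (by norm_num) (by norm_num)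
    have h011 := hmono (i:=0) (j:=1) (k:=1) (by norm_num) (by norm_num) (by norm_num)
    have h002 := hmono (i:=0) (j:=0) (k:=2) (by norm_num) (by norm_num) (by norm_num)
    have h220 := hmono (i:=2) (j:=2) (k:=0) (by norm_num) (by norm_num) (by norm_num)
    have h211 := hmono (i:=2) (j:=1) (k:=1) (by norm_num) (by norm_num) (by norm_num)
    have h202 := hmono (i:=2) (j:=0) (k:=2) (by norm_num) (by norm_num) (by norm_num)
    have h121 := hmono (i:=1) (j:=2) (k:=1) (by norm_num) (by norm_num) (by norm_num)
    have h112 := hmono (i:=1) (j:=1) (k:=2) (by norm_num) (by norm_num) (by norm_num)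
    have h103 := hmono (i:=1) (j:=0) (k:=3) (by norm_num) (by norm_num) (by norm_num)
    have h022 := hmono (i:=0) (j:=2) (k:=2) (by norm_num) (by norm_num) (by norm_num)
    have h013 := hmono (i:=0) (j:=1) (k:=3) (by norm_num) (by norm_num) (by norm_num)
    have h004 := hmono (i:=0) (j:=0) (k:=4) (by norm_num) (by norm_num) (by norm_num)
    set A : Ω → ℝ := fun ω => ∑ m ∈ Finset.range M, (F (m, 0) ω : ℝ) with hAdef
    set B : Ω → ℝ := fun ω => ∑ m ∈ Finset.range M, (F (m, 1) ω : ℝ) with hBdef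
    set C : Ω → ℝ := fun ω => ∑ m ∈ Finset.range M, (F (m, 2) ω : ℝ) with hCdef
    set PA : ℕ → ℝ := pmVal ((M:ℝ) * ((lam * p1 * (1 - p2)).toNNReal : ℝ≥0)) with hPAdef
    set PB : ℕ → ℝ := pmVal ((M:ℝ) * ((lam * p2 * (1 - p1)).toNNReal : ℝ≥0)) with hPBdef
    set PC : ℕ → ℝ := pmVal ((M:ℝ) * ((lam * p1 * p2).toNNReal : ℝ≥0)) with hPCdef
    set W : Ω → ℝ := fun ω => (A ω + C ω) * (B ω + C ω) with hWdef
    have hmA : Measurable A :=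
      Finset.measurable_sum _ (fun m _ => measurable_from_top.comp (hFm (m, 0)))
    have hmB : Measurable B :=
      Finset.measurable_sum _ (fun m _ => measurable_from_top.comp (hFm (m, 1)))
    have hmC : Measurable C :=
      Finset.measurable_sum _ (fun m _ => measurable_from_top.comp (hFm (m, 2)))
    have hmW : Measurable W := (hmA.add hmC).mul (hmB.add hmC)
    have hfun : (fun ω => rbar X1 Y M ω * rbar X2 Y M ω) = fun ω => W ω / (M:ℝ)^2 := by
      funext ω
      show (∑ m ∈ Finset.range M, ((X1 m ω : ℝ) + (Y m ω : ℝ))) / M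
          * ((∑ m ∈ Finset.range M, ((X2 m ω : ℝ) + (Y m ω : ℝ))) / M) = W ω / (M:ℝ)^2
      rw [Finset.sum_add_distrib, Finset.sum_add_distrib, div_mul_div_comm]
      have hMM : (M:ℝ) * (M:ℝ) = (M:ℝ)^2 := (sq (M:ℝ)).symm
      rw [hMM]
      rfl
    have hWeq : W = fun ω => A ω^1 * B ω^1 * C ω^0 + A ω^1 * B ω^0 * C ω^1
        + A ω^0 * B ω^1 * C ω^1 + A ω^0 * B ω^0 * C ω^2 := by
      funext ω; simp only [hWdef]; ring
    have hW2eq : (fun ω => W ω^2) = fun ω => A ω^2 * B ω^2 * C ω^0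
        + 2*(A ω^2 * B ω^1 * C ω^1) + A ω^2 * B ω^0 * C ω^2
        + 2*(A ω^1 * B ω^2 * C ω^1) + 4*(A ω^1 * B ω^1 * C ω^2)
        + 2*(A ω^1 * B ω^0 * C ω^3) + A ω^0 * B ω^2 * C ω^2
        + 2*(A ω^0 * B ω^1 * C ω^3) + A ω^0 * B ω^0 * C ω^4 := by
      funext ω; simp only [hWdef]; ring
    have w1 : Integrable (fun ω => A ω^1 * B ω^1 * C ω^0 + A ω^1 * B ω^0 * C ω^1) μ :=
      Integrable.add h110.1 h101.1
    have w2 : Integrable (fun ω => A ω^1 * B ω^1 * C ω^0 + A ω^1 * B ω^0 * C ω^1 + A ω^0 * B ω^1 * C ω^1) μ :=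
      Integrable.add w1 h011.1
    have w3 : Integrable (fun ω => A ω^1 * B ω^1 * C ω^0 + A ω^1 * B ω^0 * C ω^1 + A ω^0 * B ω^1 * C ω^1 + A ω^0 * B ω^0 * C ω^2) μ :=
      Integrable.add w2 h002.1
    have u1 : Integrable (fun ω => A ω^2 * B ω^2 * C ω^0 + 2*(A ω^2 * B ω^1 * C ω^1)) μ :=
      Integrable.add h220.1 (h211.1.const_mul 2)
    have u2 : Integrable (fun ω => A ω^2 * B ω^2 * C ω^0 + 2*(A ω^2 * B ω^1 * C ω^1) + A ω^2 * B ω^0 * C ω^2) μ :=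
      Integrable.add u1 h202.1
    have u3 : Integrable (fun ω => A ω^2 * B ω^2 * C ω^0 + 2*(A ω^2 * B ω^1 * C ω^1) + A ω^2 * B ω^0 * C ω^2 + 2*(A ω^1 * B ω^2 * C ω^1)) μ :=
      Integrable.add u2 (h121.1.const_mul 2)
    have u4 : Integrable (fun ω => A ω^2 * B ω^2 * C ω^0 + 2*(A ω^2 * B ω^1 * C ω^1) + A ω^2 * B ω^0 * C ω^2 + 2*(A ω^1 * B ω^2 * C ω^1) + 4*(A ω^1 * B ω^1 * C ω^2)) μ :=
      Integrable.add u3 (h112.1.const_mul 4)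
    have u5 : Integrable (fun ω => A ω^2 * B ω^2 * C ω^0 + 2*(A ω^2 * B ω^1 * C ω^1) + A ω^2 * B ω^0 * C ω^2 + 2*(A ω^1 * B ω^2 * C ω^1) + 4*(A ω^1 * B ω^1 * C ω^2) + 2*(A ω^1 * B ω^0 * C ω^3)) μ :=
      Integrable.add u4 (h103.1.const_mul 2)
    have u6 : Integrable (fun ω => A ω^2 * B ω^2 * C ω^0 + 2*(A ω^2 * B ω^1 * C ω^1) + A ω^2 * B ω^0 * C ω^2 + 2*(A ω^1 * B ω^2 * C ω^1) + 4*(A ω^1 * B ω^1 * C ω^2) + 2*(A ω^1 * B ω^0 * C ω^3) + A ω^0 * B ω^2 * C ω^2) μ :=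
      Integrable.add u5 h022.1
    have u7 : Integrable (fun ω => A ω^2 * B ω^2 * C ω^0 + 2*(A ω^2 * B ω^1 * C ω^1) + A ω^2 * B ω^0 * C ω^2 + 2*(A ω^1 * B ω^2 * C ω^1) + 4*(A ω^1 * B ω^1 * C ω^2) + 2*(A ω^1 * B ω^0 * C ω^3) + A ω^0 * B ω^2 * C ω^2 + 2*(A ω^0 * B ω^1 * C ω^3)) μ :=
      Integrable.add u6 (h013.1.const_mul 2)
    have u8 : Integrable (fun ω => A ω^2 * B ω^2 * C ω^0 + 2*(A ω^2 * B ω^1 * C ω^1) + A ω^2 * B ω^0 * C ω^2 + 2*(A ω^1 * B ω^2 * C ω^1) + 4*(A ω^1 * B ω^1 * C ω^2) + 2*(A ω^1 * B ω^0 * C ω^3) + A ω^0 * B ω^2 * C ω^2 + 2*(A ω^0 * B ω^1 * C ω^3) + A ω^0 * B ω^0 * C ω^4) μ :=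
      Integrable.add u7 h004.1
    have hWint : Integrable W μ := by
      rw [hWeq]; exact w3
    have hW2int : Integrable (fun ω => W ω^2) μ := by
      rw [hW2eq]; exact u8
    have hEW : ∫ ω, W ω ∂μ = PA 1 * PB 1 * PC 0 + PA 1 * PB 0 * PC 1
        + PA 0 * PB 1 * PC 1 + PA 0 * PB 0 * PC 2 := by
      rw [hWeq, integral_add w2 h002.1,
        integral_add w1 h011.1,
        integral_add h110.1 h101.1,
        h110.2, h101.2, h011.2, h002.2]
    have hEW2 : ∫ ω, W ω^2 ∂μ = PA 2 * PB 2 * PC 0 + 2*(PA 2 * PB 1 * PC 1)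
        + PA 2 * PB 0 * PC 2 + 2*(PA 1 * PB 2 * PC 1) + 4*(PA 1 * PB 1 * PC 2)
        + 2*(PA 1 * PB 0 * PC 3) + PA 0 * PB 2 * PC 2 + 2*(PA 0 * PB 1 * PC 3)
        + PA 0 * PB 0 * PC 4 := by
      rw [hW2eq, integral_add u7 h004.1,
        integral_add u6 (h013.1.const_mul 2),
        integral_add u5 h022.1,
        integral_add u4 (h103.1.const_mul 2),
        integral_add u3 (h112.1.const_mul 4),
        integral_add u2 (h121.1.const_mul 2),
        integral_add u1 h202.1,
        integral_add h220.1 (h211.1.const_mul 2),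
        integral_const_mul, integral_const_mul, integral_const_mul, integral_const_mul,
        integral_const_mul,
        h220.2, h211.2, h202.2, h121.2, h112.2, h103.2, h022.2, h013.2, h004.2]
    have hsqf : ((fun ω => W ω / (M:ℝ)^2)^2 : Ω → ℝ) = fun ω => W ω^2 / ((M:ℝ)^2)^2 := by
      funext ω
      simp only [Pi.pow_apply]
      rw [div_pow]
    have hmem : MemLp (fun ω => W ω / (M:ℝ)^2) 2 μ := by
      refine (memLp_two_iff_integrable_sq
        ((hmW.div_const _).aestronglyMeasurable)).2 ?_
      have : (fun ω => (W ω / (M:ℝ)^2)^2) = fun ω => W ω^2 / ((M:ℝ)^2)^2 := by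
        funext ω; rw [div_pow]
      rw [this]
      exact hW2int.div_const _
    rw [hfun, variance_eq_sub hmem]
    have e2 : μ[((fun ω => W ω / (M:ℝ)^2)^2 : Ω → ℝ)] = (∫ ω, W ω^2 ∂μ) / ((M:ℝ)^2)^2 := by
      rw [hsqf, integral_div]
    have e1 : μ[(fun ω => W ω / (M:ℝ)^2)] = (∫ ω, W ω ∂μ) / (M:ℝ)^2 := integral_div _ _
    rw [e2, e1, hEW, hEW2, hPAdef, hPBdef, hPCdef]
    simp only [pmVal, hra, hrb, hrc]
    field_simp
    ring
  rw [Asymptotics.isBigO_iff]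
  refine ⟨|6*(lam*p1*p2)^2 + 3*(lam*p2*(1-p1))*(lam*p1*p2) + 3*(lam*p1*(1-p2))*(lam*p1*p2)
      + (lam*p1*(1-p2))*(lam*p2*(1-p1))| + |lam*p1*p2|, ?_⟩
  filter_upwards [Filter.eventually_ge_atTop 1] with M hM
  have hM1 : (1:ℝ) ≤ (M:ℝ) := by exact_mod_cast hM
  have hm0 : (0:ℝ) < (M:ℝ) := lt_of_lt_of_le one_pos hM1
  rw [key M hM1]
  set c2e : ℝ := 6*(lam*p1*p2)^2 + 3*(lam*p2*(1-p1))*(lam*p1*p2)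
      + 3*(lam*p1*(1-p2))*(lam*p1*p2) + (lam*p1*(1-p2))*(lam*p2*(1-p1)) with hc2e
  set c1e : ℝ := lam*p1*p2 with hc1e
  have hcancel : lam ^ 3 * p1 * p2 * (p1 + p2 + 2 * p1 * p2) / (M:ℝ) + c2e / (M:ℝ)^2
      + c1e / (M:ℝ)^3 - lam ^ 3 * p1 * p2 * (p1 + p2 + 2 * p1 * p2) / (M:ℝ)
      = c2e / (M:ℝ)^2 + c1e / (M:ℝ)^3 := by ring
  rw [Real.norm_eq_abs, Real.norm_eq_abs, hcancel]
  have habs : |c2e / (M:ℝ)^2 + c1e / (M:ℝ)^3| ≤ |c2e| / (M:ℝ)^2 + |c1e| / (M:ℝ)^3 := by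
    refine (abs_add_le _ _).trans ?_
    rw [abs_div, abs_div, abs_of_pos (pow_pos hm0 2), abs_of_pos (pow_pos hm0 3)]
  refine habs.trans ?_
  have h3 : |c1e| / (M:ℝ)^3 ≤ |c1e| / (M:ℝ)^2 := by
    gcongr
    norm_num
  have h12 : |1 / (M:ℝ)^2| = 1 / (M:ℝ)^2 := abs_of_pos (by positivity)
  rw [h12]
  calc |c2e| / (M:ℝ)^2 + |c1e| / (M:ℝ)^3 ≤ |c2e| / (M:ℝ)^2 + |c1e| / (M:ℝ)^2 := by linarith
    _ = (|c2e| + |c1e|) * (1 / (M:ℝ)^2) := by ring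
end

section
/- In the bivariate Poisson sampling model, the moment estimators of the detection rates are asymptotically unbiased to second order: as M → ∞, E[p̂₁] = p₁ + O(1/M²) and E[p̂₂] = p₂ + O(1/M²); that is, the functions M ↦ E[p̂_i] − p_i (i = 1,2) are O(M^{−2}) as M → ∞. -/
set_option maxHeartbeats 4000000
open scoped ENNReal NNReal


open MeasureTheory ProbabilityTheory Filter Finset Asymptotics

lemma poisson_succ_key (c : ℝ≥0) (n : ℕ) :
    (((n+1 : ℕ)) : ℝ≥0∞) * ENNReal.ofReal (poissonPMFReal c (n+1)) =
      (c : ℝ≥0∞) * ENNReal.ofReal (poissonPMFReal c n) := by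
  rw [show (((n+1:ℕ)) : ℝ≥0∞) = ENNReal.ofReal ((n+1 : ℕ) : ℝ) from (ENNReal.ofReal_natCast _).symm,
    show ((c : ℝ≥0∞)) = ENNReal.ofReal (c : ℝ) from (ENNReal.ofReal_coe_nnreal).symm,
    ← ENNReal.ofReal_mul (by positivity), ← ENNReal.ofReal_mul c.coe_nonneg]
  congr 1
  unfold poissonPMFReal
  rw [Nat.factorial_succ]
  have h1 : ((n+1 : ℕ) : ℝ) ≠ 0 := by positivity
  have h2 : ((n.factorial : ℕ) : ℝ) ≠ 0 := by positivity
  push_cast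
  field_simp
  ring

lemma poissonMeasure_singleton (c : ℝ≥0) (n : ℕ) :
    poissonMeasure c {n} = ENNReal.ofReal (poissonPMFReal c n) := by
  rw [poissonMeasure, Measure.sum_smul_dirac_singleton]
  rfl

/-- Chen–Stein identity for the Poisson distribution, `lintegral` version, with a
passenger random variable `Z` independent of `W`. -/
lemma stein_lintegral {Ω : Type*} [MeasurableSpace Ω] {μ : Measure Ω} [IsProbabilityMeasure μ]
    {α : Type*} [MeasurableSpace α] (c : ℝ≥0) {W : Ω → ℕ} {Z : Ω → α}
    (hW : Measurable W) (hZ : Measurable Z)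
    (hmap : μ.map W = poissonMeasure c) (hind : IndepFun W Z μ)
    (g : ℕ → α → ℝ≥0∞) (hg : Measurable fun p : ℕ × α => g p.1 p.2) :
    ∫⁻ ω, (W ω : ℝ≥0∞) * g (W ω) (Z ω) ∂μ = c * ∫⁻ ω, g (W ω + 1) (Z ω) ∂μ := by
  have hpair : Measurable fun ω => (W ω, Z ω) := hW.prodMk hZ
  have hprod : μ.map (fun ω => (W ω, Z ω)) = (poissonMeasure c).prod (μ.map Z) := by
    rw [← hmap]
    exact (indepFun_iff_map_prod_eq_prod_map_map hW.aemeasurable hZ.aemeasurable).mp hind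
  have hν : IsProbabilityMeasure (μ.map Z) := Measure.isProbabilityMeasure_map hZ.aemeasurable
  have hcast : Measurable fun p : ℕ × α => ((p.1 : ℝ≥0∞)) :=
    (measurable_of_countable (fun n : ℕ => (n : ℝ≥0∞))).comp measurable_fst
  have hmeas1 : Measurable fun p : ℕ × α => (p.1 : ℝ≥0∞) * g p.1 p.2 := hcast.mul hg
  have hmeas2 : Measurable fun p : ℕ × α => g (p.1 + 1) p.2 :=
    hg.comp (((measurable_of_countable (fun n : ℕ => n + 1)).comp measurable_fst).prodMk
      measurable_snd)
  set J : ℕ → ℝ≥0∞ := fun n => ∫⁻ z, g n z ∂(μ.map Z) with hJ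
  have hgsec : ∀ n : ℕ, Measurable fun z : α => g n z := fun n =>
    hg.comp (measurable_prodMk_left)
  have hL : ∫⁻ ω, (W ω : ℝ≥0∞) * g (W ω) (Z ω) ∂μ
      = ∑' n : ℕ, ((n : ℝ≥0∞) * J n) * ENNReal.ofReal (poissonPMFReal c n) := by
    calc ∫⁻ ω, (W ω : ℝ≥0∞) * g (W ω) (Z ω) ∂μ
        = ∫⁻ p : ℕ × α, (p.1 : ℝ≥0∞) * g p.1 p.2 ∂(μ.map fun ω => (W ω, Z ω)) :=
          (lintegral_map hmeas1 hpair).symm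
      _ = ∫⁻ n, ∫⁻ z, (n : ℝ≥0∞) * g n z ∂(μ.map Z) ∂(poissonMeasure c) := by
          rw [hprod, MeasureTheory.lintegral_prod _ hmeas1.aemeasurable]
      _ = ∑' n : ℕ, ((n : ℝ≥0∞) * J n) * ENNReal.ofReal (poissonPMFReal c n) := by
          rw [lintegral_countable']
          congr 1
          funext n
          rw [lintegral_const_mul _ (hgsec n), _root_.poissonMeasure_singleton]
  have hR : ∫⁻ ω, g (W ω + 1) (Z ω) ∂μ
      = ∑' n : ℕ, J (n+1) * ENNReal.ofReal (poissonPMFReal c n) := by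
    calc ∫⁻ ω, g (W ω + 1) (Z ω) ∂μ
        = ∫⁻ p : ℕ × α, g (p.1 + 1) p.2 ∂(μ.map fun ω => (W ω, Z ω)) :=
          (lintegral_map hmeas2 hpair).symm
      _ = ∫⁻ n, ∫⁻ z, g (n+1) z ∂(μ.map Z) ∂(poissonMeasure c) := by
          rw [hprod, MeasureTheory.lintegral_prod _ hmeas2.aemeasurable]
      _ = ∑' n : ℕ, J (n+1) * ENNReal.ofReal (poissonPMFReal c n) := by
          rw [lintegral_countable']
          congr 1
          funext n
          rw [_root_.poissonMeasure_singleton]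
  rw [hL, hR]
  rw [tsum_eq_zero_add' ENNReal.summable]
  simp only [Nat.cast_zero, zero_mul, zero_add]
  calc ∑' n : ℕ, (((n+1 : ℕ) : ℝ≥0∞) * J (n+1)) * ENNReal.ofReal (poissonPMFReal c (n+1))
      = ∑' n : ℕ, (c : ℝ≥0∞) * (J (n+1) * ENNReal.ofReal (poissonPMFReal c n)) := by
        congr 1; funext n
        rw [mul_comm ((((n+1:ℕ)) : ℝ≥0∞)) (J (n+1)), mul_assoc, poisson_succ_key]
        ring
    _ = (c : ℝ≥0∞) * ∑' n : ℕ, J (n+1) * ENNReal.ofReal (poissonPMFReal c n) :=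
        ENNReal.tsum_mul_left


lemma iIndepFun_precomp_equiv {Ω ι ι' β : Type*} [MeasurableSpace Ω] [mβ : MeasurableSpace β]
    {μ : Measure Ω} {f : ι → Ω → β}
    (hf : iIndepFun f μ) (e : ι' ≃ ι) :
    iIndepFun (fun i => f (e i)) μ := by
  rw [iIndepFun_iff] at hf ⊢
  intro s f' hmeas
  have h := hf (s.map e.toEmbedding) (f' := fun i => f' (e.symm i)) ?_
  · have h1 : (⋂ i ∈ s.map e.toEmbedding, f' (e.symm i)) = ⋂ i ∈ s, f' i := by
      ext ω
      simp only [Set.mem_iInter, Finset.mem_map, Equiv.coe_toEmbedding]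
      constructor
      · intro h i hi
        have := h (e i) ⟨i, hi, rfl⟩
        simpa using this
      · rintro h j ⟨i, hi, rfl⟩
        simpa using h i hi
    have h2 : (∏ i ∈ s.map e.toEmbedding, μ (f' (e.symm i))) = ∏ i ∈ s, μ (f' i) := by
      rw [Finset.prod_map]
      exact Finset.prod_congr rfl fun i _ => by simp
    rw [h1, h2] at h
    exact h
  · intro i hi
    rw [Finset.mem_map] at hi
    obtain ⟨j, hj, rfl⟩ := hi
    simpa using hmeas j hj

theorem key {Ω : Type*} [MeasurableSpace Ω] (μ : Measure Ω) [IsProbabilityMeasure μ]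
    (a b c : ℝ≥0) (hb : 0 < b)
    (A B Y : ℕ → Ω → ℕ)
    (hmA : ∀ m, Measurable (A m)) (hmB : ∀ m, Measurable (B m)) (hmY : ∀ m, Measurable (Y m))
    (hindep : iIndepFun
      (fun q : ℕ × Fin 3 => ![A q.1, B q.1, Y q.1] q.2) μ)
    (hA : ∀ m, μ.map (A m) = poissonMeasure a)
    (hB : ∀ m, μ.map (B m) = poissonMeasure b)
    (hY : ∀ m, μ.map (Y m) = poissonMeasure c)
    (M : ℕ) (hM : 2 ≤ M) :
    |(∫ ω, sCov A B Y M ω / rbar B Y M ω ∂μ) - (c : ℝ) / ((b : ℝ) + (c : ℝ))| ≤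
      Real.exp (-(b : ℝ) * M) := by
  classical
  set F : ℕ × Fin 3 → Ω → ℕ := fun q => ![A q.1, B q.1, Y q.1] q.2 with hF
  have hmF : ∀ q, Measurable (F q) := by
    rintro ⟨m, k⟩
    fin_cases k
    · exact hmA m
    · exact hmB m
    · exact hmY m
  have hF0 : ∀ m, F (m, 0) = A m := fun m => rfl
  have hF1 : ∀ m, F (m, 1) = B m := fun m => rfl
  have hF2 : ∀ m, F (m, 2) = Y m := fun m => rfl
  set Sall : Finset (ℕ × Fin 3) := Finset.range M ×ˢ Finset.univ with hSall
  have hmemS : ∀ (j : ℕ) (k : Fin 3), j < M → (j, k) ∈ Sall := by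
    intro j k hj
    simp [hSall, Finset.mem_product, Finset.mem_range, hj]
  -- the masked tuple of "other" variables
  set Z : ℕ × Fin 3 → Ω → (ℕ × Fin 3 → ℕ) :=
    fun i₀ ω i => if i ∈ Sall.erase i₀ then F i ω else 0 with hZ
  have hmZ : ∀ i₀, Measurable (Z i₀) := by
    intro i₀
    apply measurable_pi_lambda
    intro i
    by_cases h : i ∈ Sall.erase i₀
    · simp only [hZ, if_pos h]; exact hmF i
    · simp only [hZ, if_neg h]; exact measurable_const
  have hZind : ∀ i₀, IndepFun (F i₀) (Z i₀) μ := by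
    intro i₀
    set S := Sall.erase i₀ with hS
    have hdisj : Disjoint ({i₀} : Finset (ℕ × Fin 3)) S :=
      Finset.disjoint_singleton_left.mpr (Finset.notMem_erase i₀ Sall)
    have h1 := hindep.indepFun_finset {i₀} S hdisj hmF
    have hφ : Measurable fun v : {x // x ∈ ({i₀} : Finset (ℕ × Fin 3))} → ℕ =>
        v ⟨i₀, Finset.mem_singleton_self i₀⟩ := measurable_pi_apply _
    have hψ : Measurable fun (v : {x // x ∈ S} → ℕ) (i : ℕ × Fin 3) =>
        if h : i ∈ S then v ⟨i, h⟩ else 0 := by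
      apply measurable_pi_lambda
      intro i
      by_cases h : i ∈ S
      · simp only [dif_pos h]; exact measurable_pi_apply (⟨i, h⟩ : {x // x ∈ S})
      · simp only [dif_neg h]; exact measurable_const
    have h2 := h1.comp hφ hψ
    have e1 : (fun v : {x // x ∈ ({i₀} : Finset (ℕ × Fin 3))} → ℕ =>
        v ⟨i₀, Finset.mem_singleton_self i₀⟩) ∘ (fun ω (i : {x // x ∈ ({i₀} : Finset (ℕ × Fin 3))}) =>
          F i ω) = F i₀ := rfl
    have e2 : (fun (v : {x // x ∈ S} → ℕ) (i : ℕ × Fin 3) =>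
        if h : i ∈ S then v ⟨i, h⟩ else 0) ∘ (fun ω (i : {x // x ∈ S}) => F i ω)
          = Z i₀ := by
      funext ω
      funext i
      by_cases h : i ∈ S
      · simp only [Function.comp_apply, dif_pos h, hZ, ← hS, if_pos h]
      · simp only [Function.comp_apply, dif_neg h, hZ, ← hS, if_neg h]
    rw [e1, e2] at h2
    exact h2
  have steinF : ∀ (i₀ : ℕ × Fin 3) (c₀ : ℝ≥0), μ.map (F i₀) = poissonMeasure c₀ →
      ∀ (g : ℕ → (ℕ × Fin 3 → ℕ) → ℝ≥0∞),
      (Measurable fun p : ℕ × (ℕ × Fin 3 → ℕ) => g p.1 p.2) →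
      ∫⁻ ω, (F i₀ ω : ℝ≥0∞) * g (F i₀ ω) (Z i₀ ω) ∂μ
        = c₀ * ∫⁻ ω, g (F i₀ ω + 1) (Z i₀ ω) ∂μ := by
    intro i₀ c₀ hmap g hg
    exact stein_lintegral c₀ (hmF i₀) (hmZ i₀) hmap (hZind i₀) g hg
  set T : Ω → ℕ := fun ω => ∑ m ∈ Finset.range M, (B m ω + Y m ω) with hT
  have hmT : Measurable T := Finset.measurable_sum _ (fun m _ => (hmB m).add (hmY m))
  set Pt : ℝ≥0∞ := μ {ω | T ω ≠ 0} with hPt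
  set I1 : ℝ≥0∞ := ∫⁻ ω, (((T ω + 1 : ℕ)) : ℝ≥0∞)⁻¹ ∂μ with hI1
  have hcast : Measurable fun n : ℕ => (n : ℝ≥0∞) := measurable_of_countable _
  have hTv : Measurable fun v : ℕ × Fin 3 → ℕ => ∑ j ∈ Finset.range M, (v (j,1) + v (j,2)) :=
    Finset.measurable_sum _ fun j _ => ((measurable_pi_apply _).add (measurable_pi_apply _))
  have hZeval : ∀ (i₀ : ℕ × Fin 3) (ω : Ω) (i : ℕ × Fin 3), i ∈ Sall → i ≠ i₀ →
      Z i₀ ω i = F i ω := by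
    intro i₀ ω i hi hne
    simp only [hZ]
    rw [if_pos (Finset.mem_erase.mpr ⟨hne, hi⟩)]
  have hZeval0 : ∀ (i₀ : ℕ × Fin 3) (ω : Ω), Z i₀ ω i₀ = 0 := by
    intro i₀ ω
    simp only [hZ]
    rw [if_neg (Finset.notMem_erase i₀ Sall)]
  -- coordinate sums for the three choices of erased index
  have hTv0 : ∀ m, m < M → ∀ ω,
      (∑ j ∈ Finset.range M, (Z (m,0) ω (j,1) + Z (m,0) ω (j,2))) = T ω := by
    intro m hm ω
    apply Finset.sum_congr rfl
    intro j hj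
    rw [Finset.mem_range] at hj
    rw [hZeval _ _ _ (hmemS j 1 hj) (by simp [Prod.ext_iff]),
      hZeval _ _ _ (hmemS j 2 hj) (by simp [Prod.ext_iff]), hF1, hF2]
  have hTv1 : ∀ m, m < M → ∀ ω,
      (∑ j ∈ Finset.range M, (Z (m,1) ω (j,1) + Z (m,1) ω (j,2))) + B m ω = T ω := by
    intro m hm ω
    have e : ∀ j ∈ Finset.range M, B j ω + Y j ω =
        (Z (m,1) ω (j,1) + Z (m,1) ω (j,2)) + (if j = m then B m ω else 0) := by
      intro j hj
      rw [Finset.mem_range] at hj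
      rw [hZeval _ _ _ (hmemS j 2 hj) (by simp [Prod.ext_iff]), hF2]
      by_cases h : j = m
      · subst h
        rw [hZeval0, if_pos rfl]
        omega
      · rw [hZeval _ _ _ (hmemS j 1 hj) (by simp [Prod.ext_iff, h]), hF1, if_neg h]
        omega
    have h2 : T ω = (∑ j ∈ Finset.range M, (Z (m,1) ω (j,1) + Z (m,1) ω (j,2))) + B m ω := by
      calc T ω = ∑ j ∈ Finset.range M, (B j ω + Y j ω) := rfl
        _ = ∑ j ∈ Finset.range M, ((Z (m,1) ω (j,1) + Z (m,1) ω (j,2)) +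
              (if j = m then B m ω else 0)) := Finset.sum_congr rfl e
        _ = _ := by
              rw [Finset.sum_add_distrib, Finset.sum_ite_eq' (Finset.range M) m
                (fun _ => B m ω), if_pos (Finset.mem_range.mpr hm)]
    exact h2.symm
  have hTv2 : ∀ m, m < M → ∀ ω,
      (∑ j ∈ Finset.range M, (Z (m,2) ω (j,1) + Z (m,2) ω (j,2))) + Y m ω = T ω := by
    intro m hm ω
    have e : ∀ j ∈ Finset.range M, B j ω + Y j ω =
        (Z (m,2) ω (j,1) + Z (m,2) ω (j,2)) + (if j = m then Y m ω else 0) := by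
      intro j hj
      rw [Finset.mem_range] at hj
      rw [hZeval _ _ _ (hmemS j 1 hj) (by simp [Prod.ext_iff]), hF1]
      by_cases h : j = m
      · subst h
        rw [hZeval0, if_pos rfl]
        omega
      · rw [hZeval _ _ _ (hmemS j 2 hj) (by simp [Prod.ext_iff, h]), hF2, if_neg h]
        omega
    have h2 : T ω = (∑ j ∈ Finset.range M, (Z (m,2) ω (j,1) + Z (m,2) ω (j,2))) + Y m ω := by
      calc T ω = ∑ j ∈ Finset.range M, (B j ω + Y j ω) := rfl
        _ = ∑ j ∈ Finset.range M, ((Z (m,2) ω (j,1) + Z (m,2) ω (j,2)) +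
              (if j = m then Y m ω else 0)) := Finset.sum_congr rfl e
        _ = _ := by
              rw [Finset.sum_add_distrib, Finset.sum_ite_eq' (Finset.range M) m
                (fun _ => Y m ω), if_pos (Finset.mem_range.mpr hm)]
    exact h2.symm
  have hz01 : ∀ m, m < M → ∀ ω, Z (m,0) ω (m,1) = B m ω := by
    intro m hm ω
    rw [hZeval _ _ _ (hmemS m 1 hm) (by simp [Prod.ext_iff]), hF1]
  have hz02 : ∀ m, m < M → ∀ ω, Z (m,0) ω (m,2) = Y m ω := by
    intro m hm ω
    rw [hZeval _ _ _ (hmemS m 2 hm) (by simp [Prod.ext_iff]), hF2]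
  have hz21 : ∀ m, m < M → ∀ ω, Z (m,2) ω (m,1) = B m ω := by
    intro m hm ω
    rw [hZeval _ _ _ (hmemS m 1 hm) (by simp [Prod.ext_iff]), hF1]
  have hmev : ∀ i : ℕ × Fin 3, Measurable fun p : ℕ × (ℕ × Fin 3 → ℕ) => p.2 i :=
    fun i => (measurable_pi_apply i).comp measurable_snd
  have hmTvp : Measurable fun p : ℕ × (ℕ × Fin 3 → ℕ) =>
      ∑ j ∈ Finset.range M, (p.2 (j,1) + p.2 (j,2)) := hTv.comp measurable_snd
  have hTset : MeasurableSet {ω | T ω = 0} := hmT (measurableSet_singleton 0)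
  have hTnset : MeasurableSet {ω | T ω ≠ 0} := hTset.compl
  have hPind : ∫⁻ ω, (if T ω = 0 then (0:ℝ≥0∞) else 1) ∂μ = Pt := by
    have e : (fun ω => if T ω = 0 then (0:ℝ≥0∞) else 1)
        = Set.indicator {ω | T ω ≠ 0} (fun _ => (1:ℝ≥0∞)) := by
      funext ω
      by_cases h : T ω = 0 <;> simp [Set.indicator, h]
    rw [e]
    exact lintegral_indicator_one hTnset
  have app1 : ∀ m, m < M →
      ∫⁻ ω, (A m ω : ℝ≥0∞) * (((B m ω + Y m ω : ℕ) : ℝ≥0∞) / ((T ω : ℕ) : ℝ≥0∞)) ∂μ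
        = (a : ℝ≥0∞) * ∫⁻ ω, ((B m ω + Y m ω : ℕ) : ℝ≥0∞) / ((T ω : ℕ) : ℝ≥0∞) ∂μ := by
    intro m hm
    have hg : Measurable fun p : ℕ × (ℕ × Fin 3 → ℕ) =>
        ((p.2 (m,1) + p.2 (m,2) : ℕ) : ℝ≥0∞) /
          ((∑ j ∈ Finset.range M, (p.2 (j,1) + p.2 (j,2)) : ℕ) : ℝ≥0∞) :=
      (hcast.comp ((hmev (m,1)).add (hmev (m,2)))).div (hcast.comp hmTvp)
    have h := steinF (m,0) a (by rw [hF0]; exact hA m)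
      (fun _ v => ((v (m,1) + v (m,2) : ℕ) : ℝ≥0∞) /
        ((∑ j ∈ Finset.range M, (v (j,1) + v (j,2)) : ℕ) : ℝ≥0∞)) hg
    simp only [hz01 m hm, hz02 m hm, hTv0 m hm, hF0] at h
    exact h
  have app2 : ∀ m, m < M →
      ∫⁻ ω, (Y m ω : ℝ≥0∞) * (((B m ω + Y m ω : ℕ) : ℝ≥0∞) / ((T ω : ℕ) : ℝ≥0∞)) ∂μ
        = (c : ℝ≥0∞) * ∫⁻ ω, ((B m ω + Y m ω + 1 : ℕ) : ℝ≥0∞) / ((T ω + 1 : ℕ) : ℝ≥0∞) ∂μ := by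
    intro m hm
    have hg : Measurable fun p : ℕ × (ℕ × Fin 3 → ℕ) =>
        ((p.2 (m,1) + p.1 : ℕ) : ℝ≥0∞) /
          (((∑ j ∈ Finset.range M, (p.2 (j,1) + p.2 (j,2))) + p.1 : ℕ) : ℝ≥0∞) :=
      (hcast.comp ((hmev (m,1)).add measurable_fst)).div (hcast.comp (hmTvp.add measurable_fst))
    have h := steinF (m,2) c (by rw [hF2]; exact hY m)
      (fun y v => ((v (m,1) + y : ℕ) : ℝ≥0∞) /
        (((∑ j ∈ Finset.range M, (v (j,1) + v (j,2))) + y : ℕ) : ℝ≥0∞)) hg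
    simp only [hz21 m hm, hF2, ← Nat.add_assoc] at h
    simp only [hTv2 m hm] at h
    exact h
  have app3 : ∀ m, m < M →
      ∫⁻ ω, (A m ω : ℝ≥0∞) * (if T ω = 0 then 0 else 1) ∂μ = (a : ℝ≥0∞) * Pt := by
    intro m hm
    have hg : Measurable fun p : ℕ × (ℕ × Fin 3 → ℕ) =>
        (if (∑ j ∈ Finset.range M, (p.2 (j,1) + p.2 (j,2))) = 0 then (0:ℝ≥0∞) else 1) :=
      Measurable.ite (hmTvp (measurableSet_singleton 0)) measurable_const measurable_const
    have h := steinF (m,0) a (by rw [hF0]; exact hA m)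
      (fun _ v => if (∑ j ∈ Finset.range M, (v (j,1) + v (j,2))) = 0 then (0:ℝ≥0∞) else 1) hg
    simp only [hTv0 m hm, hF0] at h
    rw [h, hPind]
  have app4 : ∀ m, m < M →
      ∫⁻ ω, (Y m ω : ℝ≥0∞) * (if T ω = 0 then 0 else 1) ∂μ = (c : ℝ≥0∞) := by
    intro m hm
    have hg : Measurable fun p : ℕ × (ℕ × Fin 3 → ℕ) =>
        (if (∑ j ∈ Finset.range M, (p.2 (j,1) + p.2 (j,2))) + p.1 = 0 then (0:ℝ≥0∞) else 1) :=
      Measurable.ite ((hmTvp.add measurable_fst) (measurableSet_singleton 0))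
        measurable_const measurable_const
    have h := steinF (m,2) c (by rw [hF2]; exact hY m)
      (fun y v => if (∑ j ∈ Finset.range M, (v (j,1) + v (j,2))) + y = 0 then (0:ℝ≥0∞) else 1) hg
    simp only [hF2, ← Nat.add_assoc] at h
    simp only [hTv2 m hm] at h
    simp only [Nat.succ_ne_zero, if_false, lintegral_one, measure_univ, mul_one] at h
    exact h
  have app5 : ∀ m, m < M →
      ∫⁻ ω, (B m ω : ℝ≥0∞) * (if T ω = 0 then 0 else ((T ω : ℕ) : ℝ≥0∞)⁻¹) ∂μ
        = (b : ℝ≥0∞) * I1 := by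
    intro m hm
    have hg : Measurable fun p : ℕ × (ℕ × Fin 3 → ℕ) =>
        (if (∑ j ∈ Finset.range M, (p.2 (j,1) + p.2 (j,2))) + p.1 = 0 then (0:ℝ≥0∞)
          else (((∑ j ∈ Finset.range M, (p.2 (j,1) + p.2 (j,2))) + p.1 : ℕ) : ℝ≥0∞)⁻¹) :=
      Measurable.ite ((hmTvp.add measurable_fst) (measurableSet_singleton 0))
        measurable_const (hcast.comp (hmTvp.add measurable_fst)).inv
    have h := steinF (m,1) b (by rw [hF1]; exact hB m)
      (fun x v => if (∑ j ∈ Finset.range M, (v (j,1) + v (j,2))) + x = 0 then (0:ℝ≥0∞)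
        else (((∑ j ∈ Finset.range M, (v (j,1) + v (j,2))) + x : ℕ) : ℝ≥0∞)⁻¹) hg
    simp only [hF1, ← Nat.add_assoc] at h
    simp only [hTv1 m hm] at h
    simp only [Nat.succ_ne_zero, if_false] at h
    rw [h, hI1]
  have app6 : ∀ m, m < M →
      ∫⁻ ω, (Y m ω : ℝ≥0∞) * (if T ω = 0 then 0 else ((T ω : ℕ) : ℝ≥0∞)⁻¹) ∂μ
        = (c : ℝ≥0∞) * I1 := by
    intro m hm
    have hg : Measurable fun p : ℕ × (ℕ × Fin 3 → ℕ) =>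
        (if (∑ j ∈ Finset.range M, (p.2 (j,1) + p.2 (j,2))) + p.1 = 0 then (0:ℝ≥0∞)
          else (((∑ j ∈ Finset.range M, (p.2 (j,1) + p.2 (j,2))) + p.1 : ℕ) : ℝ≥0∞)⁻¹) :=
      Measurable.ite ((hmTvp.add measurable_fst) (measurableSet_singleton 0))
        measurable_const (hcast.comp (hmTvp.add measurable_fst)).inv
    have h := steinF (m,2) c (by rw [hF2]; exact hY m)
      (fun y v => if (∑ j ∈ Finset.range M, (v (j,1) + v (j,2))) + y = 0 then (0:ℝ≥0∞)
        else (((∑ j ∈ Finset.range M, (v (j,1) + v (j,2))) + y : ℕ) : ℝ≥0∞)⁻¹) hg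
    simp only [hF2, ← Nat.add_assoc] at h
    simp only [hTv2 m hm] at h
    simp only [Nat.succ_ne_zero, if_false] at h
    rw [h, hI1]
  set Nn : Ω → ℕ := fun ω => ∑ m ∈ Finset.range M, (A m ω + Y m ω) * (B m ω + Y m ω) with hNn
  set Un : Ω → ℕ := fun ω => ∑ m ∈ Finset.range M, (A m ω + Y m ω) with hUn
  have hmNn : Measurable Nn :=
    Finset.measurable_sum _ fun m _ => ((hmA m).add (hmY m)).mul ((hmB m).add (hmY m))
  have hmUn : Measurable Un := Finset.measurable_sum _ fun m _ => (hmA m).add (hmY m)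
  have hmA' : ∀ m, Measurable fun ω => ((A m ω : ℕ) : ℝ≥0∞) := fun m => hcast.comp (hmA m)
  have hmB' : ∀ m, Measurable fun ω => ((B m ω : ℕ) : ℝ≥0∞) := fun m => hcast.comp (hmB m)
  have hmY' : ∀ m, Measurable fun ω => ((Y m ω : ℕ) : ℝ≥0∞) := fun m => hcast.comp (hmY m)
  have hmR2div : ∀ m, Measurable fun ω =>
      ((B m ω + Y m ω : ℕ) : ℝ≥0∞) / ((T ω : ℕ) : ℝ≥0∞) :=
    fun m => (hcast.comp ((hmB m).add (hmY m))).div (hcast.comp hmT)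
  have hmR2div' : ∀ m, Measurable fun ω =>
      ((B m ω + Y m ω + 1 : ℕ) : ℝ≥0∞) / ((T ω + 1 : ℕ) : ℝ≥0∞) :=
    fun m => (hcast.comp (((hmB m).add (hmY m)).add measurable_const)).div
      (hcast.comp (hmT.add measurable_const))
  have hmite : Measurable fun ω => (if T ω = 0 then (0:ℝ≥0∞) else 1) :=
    Measurable.ite hTset measurable_const measurable_const
  have hmgT : Measurable fun ω => (if T ω = 0 then (0:ℝ≥0∞) else ((T ω : ℕ) : ℝ≥0∞)⁻¹) :=
    Measurable.ite hTset measurable_const (hcast.comp hmT).inv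
  have hminv : Measurable fun ω => (((T ω + 1 : ℕ)) : ℝ≥0∞)⁻¹ :=
    (hcast.comp (hmT.add measurable_const)).inv
  have hFe : ∫⁻ ω, ((Nn ω : ℕ) : ℝ≥0∞) / ((T ω : ℕ) : ℝ≥0∞) ∂μ
      = (a : ℝ≥0∞) * Pt + (c : ℝ≥0∞) * (1 + ((M - 1 : ℕ) : ℝ≥0∞) * I1) := by
    have e1 : ∀ ω, ((Nn ω : ℕ) : ℝ≥0∞) / ((T ω : ℕ) : ℝ≥0∞)
        = ∑ m ∈ Finset.range M,
          ((A m ω : ℝ≥0∞) * (((B m ω + Y m ω : ℕ) : ℝ≥0∞) / ((T ω : ℕ) : ℝ≥0∞))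
            + (Y m ω : ℝ≥0∞) * (((B m ω + Y m ω : ℕ) : ℝ≥0∞) / ((T ω : ℕ) : ℝ≥0∞))) := by
      intro ω
      show ((∑ m ∈ Finset.range M, (A m ω + Y m ω) * (B m ω + Y m ω) : ℕ) : ℝ≥0∞) / _ = _
      push_cast
      simp only [div_eq_mul_inv]
      rw [Finset.sum_mul]
      apply Finset.sum_congr rfl
      intro m _
      ring
    rw [lintegral_congr e1, lintegral_finset_sum _
      (fun m _ => ((hmA' m).fun_mul (hmR2div m)).fun_add ((hmY' m).fun_mul (hmR2div m)))]
    have e2 : ∀ m ∈ Finset.range M,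
        (∫⁻ ω, ((A m ω : ℝ≥0∞) * (((B m ω + Y m ω : ℕ) : ℝ≥0∞) / ((T ω : ℕ) : ℝ≥0∞))
          + (Y m ω : ℝ≥0∞) * (((B m ω + Y m ω : ℕ) : ℝ≥0∞) / ((T ω : ℕ) : ℝ≥0∞))) ∂μ)
        = (a : ℝ≥0∞) * ∫⁻ ω, ((B m ω + Y m ω : ℕ) : ℝ≥0∞) / ((T ω : ℕ) : ℝ≥0∞) ∂μ
          + (c : ℝ≥0∞) * ∫⁻ ω, ((B m ω + Y m ω + 1 : ℕ) : ℝ≥0∞) / ((T ω + 1 : ℕ) : ℝ≥0∞) ∂μ := by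
      intro m hm
      rw [lintegral_add_left ((hmA' m).fun_mul (hmR2div m)), app1 m (Finset.mem_range.mp hm),
        app2 m (Finset.mem_range.mp hm)]
    rw [Finset.sum_congr rfl e2, Finset.sum_add_distrib, ← Finset.mul_sum, ← Finset.mul_sum]
    have hsumJ : (∑ m ∈ Finset.range M,
        ∫⁻ ω, ((B m ω + Y m ω : ℕ) : ℝ≥0∞) / ((T ω : ℕ) : ℝ≥0∞) ∂μ) = Pt := by
      rw [← lintegral_finset_sum _ (fun m _ => hmR2div m)]
      rw [← hPind]
      apply lintegral_congr
      intro ω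
      simp only [div_eq_mul_inv, ← Finset.sum_mul, ← Nat.cast_sum]
      by_cases h : T ω = 0
      · have h2 : (∑ m ∈ Finset.range M, (B m ω + Y m ω)) = 0 := h
        simp [h, h2]
      · have h2 : (∑ m ∈ Finset.range M, (B m ω + Y m ω)) = T ω := rfl
        rw [h2, if_neg h, ENNReal.mul_inv_cancel (by exact_mod_cast h) (ENNReal.natCast_ne_top _)]
    have hsumK : (∑ m ∈ Finset.range M,
        ∫⁻ ω, ((B m ω + Y m ω + 1 : ℕ) : ℝ≥0∞) / ((T ω + 1 : ℕ) : ℝ≥0∞) ∂μ)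
        = 1 + ((M - 1 : ℕ) : ℝ≥0∞) * I1 := by
      rw [← lintegral_finset_sum _ (fun m _ => hmR2div' m)]
      have eK : ∀ ω, (∑ m ∈ Finset.range M,
          ((B m ω + Y m ω + 1 : ℕ) : ℝ≥0∞) / ((T ω + 1 : ℕ) : ℝ≥0∞))
          = 1 + ((M - 1 : ℕ) : ℝ≥0∞) * (((T ω + 1 : ℕ)) : ℝ≥0∞)⁻¹ := by
        intro ω
        simp only [div_eq_mul_inv, ← Finset.sum_mul, ← Nat.cast_sum]
        have h2 : (∑ m ∈ Finset.range M, (B m ω + Y m ω + 1)) = (T ω + 1) + (M - 1) := by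
          rw [Finset.sum_add_distrib, Finset.sum_const, Finset.card_range, smul_eq_mul, mul_one]
          have h3 : (∑ m ∈ Finset.range M, (B m ω + Y m ω)) = T ω := rfl
          omega
        rw [h2, Nat.cast_add, add_mul,
          ENNReal.mul_inv_cancel (by exact_mod_cast Nat.succ_ne_zero (T ω))
            (ENNReal.natCast_ne_top _)]
      rw [lintegral_congr eK, lintegral_add_left measurable_const, lintegral_const_mul _ hminv,
        lintegral_one, measure_univ]
    rw [hsumJ, hsumK]
  have hGe : ∫⁻ ω, ((Un ω : ℕ) : ℝ≥0∞) * (if T ω = 0 then 0 else 1) ∂μ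
      = (M : ℝ≥0∞) * ((a : ℝ≥0∞) * Pt) + (M : ℝ≥0∞) * (c : ℝ≥0∞) := by
    have e1 : ∀ ω, ((Un ω : ℕ) : ℝ≥0∞) * (if T ω = 0 then 0 else 1)
        = ∑ m ∈ Finset.range M,
          ((A m ω : ℝ≥0∞) * (if T ω = 0 then 0 else 1)
            + (Y m ω : ℝ≥0∞) * (if T ω = 0 then 0 else 1)) := by
      intro ω
      show ((∑ m ∈ Finset.range M, (A m ω + Y m ω) : ℕ) : ℝ≥0∞) * _ = _
      push_cast
      rw [Finset.sum_mul]
      apply Finset.sum_congr rfl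
      intro m _
      rw [add_mul]
    rw [lintegral_congr e1, lintegral_finset_sum _
      (fun m _ => ((hmA' m).fun_mul hmite).fun_add ((hmY' m).fun_mul hmite))]
    have e2 : ∀ m ∈ Finset.range M,
        (∫⁻ ω, ((A m ω : ℝ≥0∞) * (if T ω = 0 then 0 else 1)
          + (Y m ω : ℝ≥0∞) * (if T ω = 0 then 0 else 1)) ∂μ)
        = (a : ℝ≥0∞) * Pt + (c : ℝ≥0∞) := by
      intro m hm
      rw [lintegral_add_left ((hmA' m).fun_mul hmite), app3 m (Finset.mem_range.mp hm),
        app4 m (Finset.mem_range.mp hm)]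
    rw [Finset.sum_congr rfl e2, Finset.sum_const, Finset.card_range, nsmul_eq_mul, mul_add]
  have hPrel : Pt = ((b : ℝ≥0∞) + (c : ℝ≥0∞)) * ((M : ℝ≥0∞) * I1) := by
    have e1 : ∀ ω, (if T ω = 0 then (0:ℝ≥0∞) else 1)
        = ∑ m ∈ Finset.range M,
          ((B m ω : ℝ≥0∞) * (if T ω = 0 then 0 else ((T ω : ℕ) : ℝ≥0∞)⁻¹)
            + (Y m ω : ℝ≥0∞) * (if T ω = 0 then 0 else ((T ω : ℕ) : ℝ≥0∞)⁻¹)) := by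
      intro ω
      symm
      calc ∑ m ∈ Finset.range M,
          ((B m ω : ℝ≥0∞) * (if T ω = 0 then 0 else ((T ω : ℕ) : ℝ≥0∞)⁻¹)
            + (Y m ω : ℝ≥0∞) * (if T ω = 0 then 0 else ((T ω : ℕ) : ℝ≥0∞)⁻¹))
          = ((∑ m ∈ Finset.range M, (B m ω + Y m ω) : ℕ) : ℝ≥0∞)
            * (if T ω = 0 then 0 else ((T ω : ℕ) : ℝ≥0∞)⁻¹) := by
            push_cast
            rw [Finset.sum_mul]
            apply Finset.sum_congr rfl
            intro m _
            rw [add_mul]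
        _ = (if T ω = 0 then (0:ℝ≥0∞) else 1) := by
            have h2 : (∑ m ∈ Finset.range M, (B m ω + Y m ω)) = T ω := rfl
            rw [h2]
            by_cases h : T ω = 0
            · simp [h]
            · rw [if_neg h, if_neg h,
                ENNReal.mul_inv_cancel (by exact_mod_cast h) (ENNReal.natCast_ne_top _)]
    rw [← hPind, lintegral_congr e1, lintegral_finset_sum _
      (fun m _ => ((hmB' m).fun_mul hmgT).fun_add ((hmY' m).fun_mul hmgT))]
    have e2 : ∀ m ∈ Finset.range M,
        (∫⁻ ω, ((B m ω : ℝ≥0∞) * (if T ω = 0 then 0 else ((T ω : ℕ) : ℝ≥0∞)⁻¹)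
          + (Y m ω : ℝ≥0∞) * (if T ω = 0 then 0 else ((T ω : ℕ) : ℝ≥0∞)⁻¹)) ∂μ)
        = (b : ℝ≥0∞) * I1 + (c : ℝ≥0∞) * I1 := by
      intro m hm
      rw [lintegral_add_left ((hmB' m).fun_mul hmgT), app5 m (Finset.mem_range.mp hm),
        app6 m (Finset.mem_range.mp hm)]
    rw [Finset.sum_congr rfl e2, Finset.sum_const, Finset.card_range, nsmul_eq_mul]
    ring
  have hPtle : Pt ≤ 1 := prob_le_one
  have hI1le : I1 ≤ 1 := by
    rw [hI1]
    calc ∫⁻ ω, (((T ω + 1 : ℕ)) : ℝ≥0∞)⁻¹ ∂μ ≤ ∫⁻ _, 1 ∂μ := by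
          apply lintegral_mono
          intro ω
          rw [ENNReal.inv_le_one]
          exact_mod_cast Nat.one_le_iff_ne_zero.mpr (Nat.succ_ne_zero _)
      _ = 1 := by rw [lintegral_one, measure_univ]
  have hPtne : Pt ≠ ⊤ := (lt_of_le_of_lt hPtle ENNReal.one_lt_top).ne
  have hI1ne : I1 ≠ ⊤ := (lt_of_le_of_lt hI1le ENNReal.one_lt_top).ne
  have hFetop : (∫⁻ ω, ((Nn ω : ℕ) : ℝ≥0∞) / ((T ω : ℕ) : ℝ≥0∞) ∂μ) ≠ ⊤ := by
    rw [hFe]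
    exact ENNReal.add_ne_top.mpr ⟨ENNReal.mul_ne_top ENNReal.coe_ne_top hPtne,
      ENNReal.mul_ne_top ENNReal.coe_ne_top (ENNReal.add_ne_top.mpr ⟨ENNReal.one_ne_top,
        ENNReal.mul_ne_top (ENNReal.natCast_ne_top _) hI1ne⟩)⟩
  have hGetop : (∫⁻ ω, ((Un ω : ℕ) : ℝ≥0∞) * (if T ω = 0 then 0 else 1) ∂μ) ≠ ⊤ := by
    rw [hGe]
    exact ENNReal.add_ne_top.mpr ⟨ENNReal.mul_ne_top (ENNReal.natCast_ne_top _)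
      (ENNReal.mul_ne_top ENNReal.coe_ne_top hPtne),
      ENNReal.mul_ne_top (ENNReal.natCast_ne_top _) ENNReal.coe_ne_top⟩
  have hNT : ∀ ω, T ω = 0 → Nn ω = 0 := by
    intro ω h
    have h' : (∑ m ∈ Finset.range M, (B m ω + Y m ω)) = 0 := h
    apply Finset.sum_eq_zero
    intro m hm
    rw [(Finset.sum_eq_zero_iff.mp h') m hm, mul_zero]
  have hFelt : ∀ ω, ((Nn ω : ℕ) : ℝ≥0∞) / ((T ω : ℕ) : ℝ≥0∞) < ⊤ := by
    intro ω
    by_cases h : T ω = 0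
    · rw [hNT ω h, h]
      simp
    · exact ENNReal.div_lt_top (ENNReal.natCast_ne_top _) (by exact_mod_cast h)
  have hGelt : ∀ ω, ((Un ω : ℕ) : ℝ≥0∞) * (if T ω = 0 then 0 else 1) < ⊤ := by
    intro ω
    by_cases h : T ω = 0
    · simp [h]
    · rw [if_neg h, mul_one]
      exact ENNReal.natCast_lt_top _
  have hmFe : Measurable fun ω => ((Nn ω : ℕ) : ℝ≥0∞) / ((T ω : ℕ) : ℝ≥0∞) :=
    (hcast.comp hmNn).div (hcast.comp hmT)
  have hmGe : Measurable fun ω => ((Un ω : ℕ) : ℝ≥0∞) * (if T ω = 0 then 0 else 1) :=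
    (hcast.comp hmUn).mul hmite
  have hIntF : Integrable (fun ω => (((Nn ω : ℕ) : ℝ≥0∞) / ((T ω : ℕ) : ℝ≥0∞)).toReal) μ :=
    integrable_toReal_of_lintegral_ne_top
      ((hcast.comp hmNn).div (hcast.comp hmT)).aemeasurable hFetop
  have hIntG : Integrable
      (fun ω => (((Un ω : ℕ) : ℝ≥0∞) * (if T ω = 0 then 0 else 1)).toReal) μ :=
    integrable_toReal_of_lintegral_ne_top ((hcast.comp hmUn).mul hmite).aemeasurable hGetop
  have hM0 : (M : ℝ) ≠ 0 := Nat.cast_ne_zero.mpr (by omega)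
  have hM2 : (2:ℝ) ≤ (M:ℝ) := by exact_mod_cast hM
  have hM1 : (M : ℝ) - 1 ≠ 0 := by linarith
  have hpoint : ∀ ω, sCov A B Y M ω / rbar B Y M ω
      = ((M:ℝ)/((M:ℝ)-1)) * (((Nn ω : ℕ) : ℝ≥0∞) / ((T ω : ℕ) : ℝ≥0∞)).toReal
        - ((M:ℝ)-1)⁻¹ * (((Un ω : ℕ) : ℝ≥0∞) * (if T ω = 0 then 0 else 1)).toReal := by
    intro ω
    have hTsum : (∑ m ∈ Finset.range M, ((B m ω : ℝ) + (Y m ω : ℝ))) = ((T ω : ℕ) : ℝ) := by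
      have h2 : T ω = ∑ m ∈ Finset.range M, (B m ω + Y m ω) := rfl
      rw [h2]
      push_cast
      rfl
    have hUsum : (∑ m ∈ Finset.range M, ((A m ω : ℝ) + (Y m ω : ℝ))) = ((Un ω : ℕ) : ℝ) := by
      have h2 : Un ω = ∑ m ∈ Finset.range M, (A m ω + Y m ω) := rfl
      rw [h2]
      push_cast
      rfl
    have hNsum : ((Nn ω : ℕ) : ℝ)
        = ∑ m ∈ Finset.range M, ((A m ω : ℝ)+(Y m ω : ℝ))*((B m ω : ℝ)+(Y m ω : ℝ)) := by
      have h2 : Nn ω = ∑ m ∈ Finset.range M, (A m ω + Y m ω) * (B m ω + Y m ω) := rfl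
      rw [h2]
      push_cast
      rfl
    have htoF : (((Nn ω : ℕ) : ℝ≥0∞) / ((T ω : ℕ) : ℝ≥0∞)).toReal
        = ((Nn ω : ℕ) : ℝ) / ((T ω : ℕ) : ℝ) := by
      rw [ENNReal.toReal_div]
      simp
    have htoG : (((Un ω : ℕ) : ℝ≥0∞) * (if T ω = 0 then 0 else 1)).toReal
        = ((Un ω : ℕ) : ℝ) * (if T ω = 0 then 0 else 1) := by
      by_cases h : T ω = 0 <;> simp [h]
    rw [htoF, htoG]
    have hrbarB : rbar B Y M ω = ((T ω : ℕ) : ℝ) / (M : ℝ) := by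
      rw [rbar, hTsum]
    have hrbarA : rbar A Y M ω = ((Un ω : ℕ) : ℝ) / (M : ℝ) := by
      rw [rbar, hUsum]
    by_cases h : T ω = 0
    · have hBY : ∀ m ∈ Finset.range M, B m ω + Y m ω = 0 :=
        Finset.sum_eq_zero_iff.mp (show (∑ m ∈ Finset.range M, (B m ω + Y m ω)) = 0 from h)
      rw [hrbarB, hNT ω h, h]
      norm_num
    · have ht : ((T ω : ℕ) : ℝ) ≠ 0 := Nat.cast_ne_zero.mpr h
      rw [sCov, hrbarA, hrbarB, if_neg h]
      have expand : (∑ m ∈ Finset.range M,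
          (((A m ω : ℝ) + (Y m ω : ℝ)) - ((Un ω : ℕ) : ℝ)/(M:ℝ))
            * (((B m ω : ℝ) + (Y m ω : ℝ)) - ((T ω : ℕ) : ℝ)/(M:ℝ)))
          = ((Nn ω : ℕ) : ℝ) - ((Un ω : ℕ) : ℝ) * ((T ω : ℕ) : ℝ) / (M:ℝ) := by
        have e : ∀ m ∈ Finset.range M,
            (((A m ω : ℝ) + (Y m ω : ℝ)) - ((Un ω : ℕ) : ℝ)/(M:ℝ))
              * (((B m ω : ℝ) + (Y m ω : ℝ)) - ((T ω : ℕ) : ℝ)/(M:ℝ))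
            = ((A m ω : ℝ)+(Y m ω : ℝ))*((B m ω : ℝ)+(Y m ω : ℝ))
              - (((Un ω : ℕ) : ℝ)/(M:ℝ)) * ((B m ω : ℝ)+(Y m ω : ℝ))
              - (((T ω : ℕ) : ℝ)/(M:ℝ)) * ((A m ω : ℝ)+(Y m ω : ℝ))
              + (((Un ω : ℕ) : ℝ)/(M:ℝ)) * (((T ω : ℕ) : ℝ)/(M:ℝ)) := by
          intro m _
          ring
        rw [Finset.sum_congr rfl e]
        rw [Finset.sum_add_distrib, Finset.sum_sub_distrib, Finset.sum_sub_distrib,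
          ← Finset.mul_sum, ← Finset.mul_sum, Finset.sum_const, Finset.card_range,
          nsmul_eq_mul, ← hNsum, hTsum, hUsum]
        field_simp
        ring
      rw [expand]
      field_simp
  have hsplit : ∫ ω, sCov A B Y M ω / rbar B Y M ω ∂μ
      = ((M:ℝ)/((M:ℝ)-1)) * (∫⁻ ω, ((Nn ω : ℕ) : ℝ≥0∞) / ((T ω : ℕ) : ℝ≥0∞) ∂μ).toReal
        - ((M:ℝ)-1)⁻¹ *
          (∫⁻ ω, ((Un ω : ℕ) : ℝ≥0∞) * (if T ω = 0 then 0 else 1) ∂μ).toReal := by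
    have e : (fun ω => sCov A B Y M ω / rbar B Y M ω)
        = fun ω => ((M:ℝ)/((M:ℝ)-1)) * (((Nn ω : ℕ) : ℝ≥0∞) / ((T ω : ℕ) : ℝ≥0∞)).toReal
          - ((M:ℝ)-1)⁻¹ * (((Un ω : ℕ) : ℝ≥0∞) * (if T ω = 0 then 0 else 1)).toReal :=
      funext hpoint
    rw [e, integral_sub (hIntF.const_mul _) (hIntG.const_mul _), integral_const_mul,
      integral_const_mul,
      integral_toReal hmFe.aemeasurable (ae_of_all μ hFelt),
      integral_toReal hmGe.aemeasurable (ae_of_all μ hGelt)]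
  have hKcast : (((M - 1 : ℕ)) : ℝ) = (M : ℝ) - 1 := by
    rw [Nat.cast_sub (by omega)]
    norm_num
  have hFeR : (∫⁻ ω, ((Nn ω : ℕ) : ℝ≥0∞) / ((T ω : ℕ) : ℝ≥0∞) ∂μ).toReal
      = (a : ℝ) * Pt.toReal + (c : ℝ) * (1 + ((M:ℝ) - 1) * I1.toReal) := by
    rw [hFe, ENNReal.toReal_add (ENNReal.mul_ne_top ENNReal.coe_ne_top hPtne)
        (ENNReal.mul_ne_top ENNReal.coe_ne_top (ENNReal.add_ne_top.mpr ⟨ENNReal.one_ne_top,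
          ENNReal.mul_ne_top (ENNReal.natCast_ne_top _) hI1ne⟩)),
      ENNReal.toReal_mul, ENNReal.toReal_mul,
      ENNReal.toReal_add ENNReal.one_ne_top
        (ENNReal.mul_ne_top (ENNReal.natCast_ne_top _) hI1ne),
      ENNReal.toReal_mul]
    rw [ENNReal.coe_toReal, ENNReal.coe_toReal, ENNReal.toReal_one, ENNReal.toReal_natCast,
      hKcast]
  have hGeR : (∫⁻ ω, ((Un ω : ℕ) : ℝ≥0∞) * (if T ω = 0 then 0 else 1) ∂μ).toReal
      = (M:ℝ) * ((a:ℝ) * Pt.toReal) + (M:ℝ) * (c:ℝ) := by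
    rw [hGe, ENNReal.toReal_add (ENNReal.mul_ne_top (ENNReal.natCast_ne_top _)
        (ENNReal.mul_ne_top ENNReal.coe_ne_top hPtne))
        (ENNReal.mul_ne_top (ENNReal.natCast_ne_top _) ENNReal.coe_ne_top),
      ENNReal.toReal_mul, ENNReal.toReal_mul, ENNReal.toReal_mul]
    rw [ENNReal.coe_toReal, ENNReal.coe_toReal, ENNReal.toReal_natCast]
  have hPrelR : Pt.toReal = ((b:ℝ) + (c:ℝ)) * ((M:ℝ) * I1.toReal) := by
    rw [hPrel, ENNReal.toReal_mul, ENNReal.toReal_mul,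
      ENNReal.toReal_add ENNReal.coe_ne_top ENNReal.coe_ne_top]
    rw [ENNReal.coe_toReal, ENNReal.coe_toReal, ENNReal.toReal_natCast]
  have hE : ∫ ω, sCov A B Y M ω / rbar B Y M ω ∂μ = (c:ℝ) * ((M:ℝ) * I1.toReal) := by
    rw [hsplit, hFeR, hGeR]
    field_simp
    ring
  have hbR : (0:ℝ) < (b:ℝ) := hb
  have hcR : (0:ℝ) ≤ (c:ℝ) := c.coe_nonneg
  have hbc : (0:ℝ) < (b:ℝ) + (c:ℝ) := by linarith
  have hQc : Pt.toReal + (μ {ω | T ω = 0}).toReal = 1 := by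
    have h1 : μ {ω | T ω = 0} + μ {ω | T ω ≠ 0} = 1 := by
      have h0 := measure_add_measure_compl (μ := μ) hTset
      rw [measure_univ] at h0
      have h2 : {ω | T ω = 0}ᶜ = {ω | T ω ≠ 0} := by
        ext ω
        simp
      rw [h2] at h0
      exact h0
    have h3 : Pt + μ {ω | T ω = 0} = 1 := by
      rw [hPt, add_comm]
      exact h1
    rw [← ENNReal.toReal_add hPtne (measure_ne_top μ _), h3, ENNReal.toReal_one]
  have hQbound : (μ {ω | T ω = 0}).toReal ≤ Real.exp (-(b:ℝ) * M) := by
    have hsub : {ω | T ω = 0} ⊆ ⋂ m ∈ Finset.range M, (F (m,(1:Fin 3)) ⁻¹' {0}) := by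
      intro ω h
      simp only [Set.mem_iInter]
      intro m hm
      have h' : (∑ j ∈ Finset.range M, (B j ω + Y j ω)) = 0 := h
      have h2 := (Finset.sum_eq_zero_iff.mp h') m hm
      have h3 : B m ω = 0 := by omega
      simp only [Set.mem_preimage, Set.mem_singleton_iff, hF1]
      exact h3
    have hprod := hindep.meas_biInter
      (S := (Finset.range M).map ⟨fun m => (m,(1:Fin 3)), fun x y h => congrArg Prod.fst h⟩)
      (s := fun i => F i ⁻¹' {0}) (fun i _ => ⟨{0}, trivial, rfl⟩)
    have hinter : (⋂ i ∈ (Finset.range M).map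
        (⟨fun m => (m,(1:Fin 3)), fun x y h => congrArg Prod.fst h⟩ : ℕ ↪ ℕ × Fin 3),
          F i ⁻¹' {0}) = ⋂ m ∈ Finset.range M, (F (m,(1:Fin 3)) ⁻¹' {0}) := by
      ext ω
      simp only [Set.mem_iInter, Finset.mem_map, Function.Embedding.coeFn_mk]
      constructor
      · intro h m hm
        exact h (m, (1:Fin 3)) ⟨m, hm, rfl⟩
      · rintro h i ⟨m, hm, rfl⟩
        exact h m hm
    have hsingle : ∀ m : ℕ, μ (F (m,(1:Fin 3)) ⁻¹' {0})
        = ENNReal.ofReal (Real.exp (-(b:ℝ))) := by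
      intro m
      rw [hF1, ← Measure.map_apply (hmB m) (measurableSet_singleton 0), hB m,
        _root_.poissonMeasure_singleton]
      congr 1
      unfold poissonPMFReal
      simp
    have hle : μ {ω | T ω = 0} ≤ ENNReal.ofReal (Real.exp (-(b:ℝ))) ^ M := by
      calc μ {ω | T ω = 0} ≤ μ (⋂ m ∈ Finset.range M, (F (m,(1:Fin 3)) ⁻¹' {0})) :=
            measure_mono hsub
        _ = ∏ i ∈ (Finset.range M).map
              (⟨fun m => (m,(1:Fin 3)), fun x y h => congrArg Prod.fst h⟩ : ℕ ↪ ℕ × Fin 3),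
              μ (F i ⁻¹' {0}) := by
            rw [← hinter]
            exact hprod
        _ = ∏ m ∈ Finset.range M, μ (F (m,(1:Fin 3)) ⁻¹' {0}) := Finset.prod_map _ _ _
        _ = ENNReal.ofReal (Real.exp (-(b:ℝ))) ^ M := by
            rw [Finset.prod_congr rfl (fun m _ => hsingle m), Finset.prod_const,
              Finset.card_range]
    calc (μ {ω | T ω = 0}).toReal
        ≤ (ENNReal.ofReal (Real.exp (-(b:ℝ))) ^ M).toReal :=
          ENNReal.toReal_mono (ENNReal.pow_ne_top ENNReal.ofReal_ne_top) hle
      _ = Real.exp (-(b:ℝ)) ^ M := by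
          rw [ENNReal.toReal_pow, ENNReal.toReal_ofReal (Real.exp_nonneg _)]
      _ = Real.exp (-(b:ℝ) * M) := by
          rw [← Real.exp_nat_mul]
          congr 1
          ring
  have hEr : ∫ ω, sCov A B Y M ω / rbar B Y M ω ∂μ - (c:ℝ)/((b:ℝ)+(c:ℝ))
      = -((c:ℝ)/((b:ℝ)+(c:ℝ)) * (μ {ω | T ω = 0}).toReal) := by
    rw [hE]
    have hMIr : (M:ℝ) * I1.toReal = Pt.toReal / ((b:ℝ)+(c:ℝ)) := by
      rw [hPrelR]
      field_simp
    rw [hMIr]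
    have hPrv : Pt.toReal = 1 - (μ {ω | T ω = 0}).toReal := by linarith
    rw [hPrv]
    field_simp
    ring
  rw [hEr, abs_neg, abs_of_nonneg (mul_nonneg (div_nonneg hcR (le_of_lt hbc))
    ENNReal.toReal_nonneg)]
  calc (c:ℝ)/((b:ℝ)+(c:ℝ)) * (μ {ω | T ω = 0}).toReal
      ≤ 1 * (μ {ω | T ω = 0}).toReal := by
        apply mul_le_mul_of_nonneg_right _ ENNReal.toReal_nonneg
        rw [div_le_one hbc]
        linarith
    _ = (μ {ω | T ω = 0}).toReal := one_mul _
    _ ≤ Real.exp (-(b:ℝ) * M) := hQbound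






lemma sCov_comm {Ω : Type*} (A B Y : ℕ → Ω → ℕ) (M : ℕ) : sCov A B Y M = sCov B A Y M := by
  funext ω
  unfold sCov
  congr 1
  apply Finset.sum_congr rfl
  intro m _
  ring

lemma bias_isBigO {E : ℕ → ℝ} {p β : ℝ} (hβ : 0 < β)
    (h : ∀ M : ℕ, 2 ≤ M → |E M - p| ≤ Real.exp (-β * M)) :
    (fun M : ℕ => E M - p) =O[atTop] fun M : ℕ => 1 / (M:ℝ)^2 := by
  have hr : ‖Real.exp (-β)‖ < 1 := by
    rw [Real.norm_eq_abs, abs_of_pos (Real.exp_pos _)]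
    exact Real.exp_lt_one_iff.mpr (by linarith)
  have hsum : Summable (fun n : ℕ => (n:ℝ)^2 * (Real.exp (-β))^n) :=
    summable_pow_mul_geometric_of_norm_lt_one 2 hr
  have htend := hsum.tendsto_atTop_zero
  rw [Asymptotics.isBigO_iff]
  refine ⟨1, ?_⟩
  have hev : ∀ᶠ M : ℕ in atTop, (M:ℝ)^2 * (Real.exp (-β))^M < 1 :=
    htend.eventually_lt_const one_pos
  filter_upwards [hev, Filter.eventually_ge_atTop 2] with M h1 h2
  have hMpos : (0:ℝ) < (M:ℝ) := by
    have : (2:ℝ) ≤ (M:ℝ) := by exact_mod_cast h2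
    linarith
  have hM0 : (0:ℝ) < (M:ℝ)^2 := by positivity
  have h3 : Real.exp (-β * M) = (Real.exp (-β))^M := by
    rw [← Real.exp_nat_mul]
    congr 1
    ring
  have h4 : (Real.exp (-β))^M ≤ 1/(M:ℝ)^2 := by
    rw [le_div_iff₀ hM0]
    calc Real.exp (-β)^M * (M:ℝ)^2 = (M:ℝ)^2 * Real.exp (-β)^M := by ring
      _ ≤ 1 := le_of_lt h1
  calc ‖E M - p‖ = |E M - p| := rfl
    _ ≤ Real.exp (-β * M) := h M h2
    _ = (Real.exp (-β))^M := h3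
    _ ≤ 1/(M:ℝ)^2 := h4
    _ ≤ 1 * ‖1/(M:ℝ)^2‖ := by
        rw [one_mul, Real.norm_eq_abs, abs_of_nonneg (by positivity)]

/-- `E[p̂ᵢ] = pᵢ + O(1/M²)` as `M → ∞`, for `i = 1, 2`. -/
theorem moment_estimators_detection_bias
    {Ω : Type*} [MeasurableSpace Ω] (μ : Measure Ω) [IsProbabilityMeasure μ]
    (lam p1 p2 : ℝ) (hlam : 0 < lam)
    (hp1 : p1 ∈ Set.Ioo (0 : ℝ) 1) (hp2 : p2 ∈ Set.Ioo (0 : ℝ) 1)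
    (X1 X2 Y : ℕ → Ω → ℕ)
    (hmX1 : ∀ m, Measurable (X1 m)) (hmX2 : ∀ m, Measurable (X2 m))
    (hmY : ∀ m, Measurable (Y m))
    (hindep : iIndepFun
      (fun q : ℕ × Fin 3 => ![X1 q.1, X2 q.1, Y q.1] q.2) μ)
    (hX1 : ∀ m, μ.map (X1 m) = poissonMeasure (lam * p1 * (1 - p2)).toNNReal)
    (hX2 : ∀ m, μ.map (X2 m) = poissonMeasure (lam * p2 * (1 - p1)).toNNReal)
    (hY : ∀ m, μ.map (Y m) = poissonMeasure (lam * p1 * p2).toNNReal) :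
    ((fun M : ℕ => (∫ ω, sCov X1 X2 Y M ω / rbar X2 Y M ω ∂μ) - p1)
      =O[atTop] (fun M : ℕ => 1 / (M : ℝ) ^ 2)) ∧
    ((fun M : ℕ => (∫ ω, sCov X1 X2 Y M ω / rbar X1 Y M ω ∂μ) - p2)
      =O[atTop] (fun M : ℕ => 1 / (M : ℝ) ^ 2)) := by
  obtain ⟨hp1a, hp1b⟩ := hp1
  obtain ⟨hp2a, hp2b⟩ := hp2
  have h1pos : 0 < lam * p1 * (1 - p2) := by
    apply mul_pos (mul_pos hlam hp1a)
    linarith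
  have h2pos : 0 < lam * p2 * (1 - p1) := by
    apply mul_pos (mul_pos hlam hp2a)
    linarith
  have hcpos : 0 < lam * p1 * p2 := mul_pos (mul_pos hlam hp1a) hp2a
  have ha1 : (((lam * p1 * (1 - p2)).toNNReal : ℝ≥0) : ℝ) = lam * p1 * (1 - p2) :=
    Real.coe_toNNReal _ (le_of_lt h1pos)
  have ha2 : (((lam * p2 * (1 - p1)).toNNReal : ℝ≥0) : ℝ) = lam * p2 * (1 - p1) :=
    Real.coe_toNNReal _ (le_of_lt h2pos)
  have hcc : (((lam * p1 * p2).toNNReal : ℝ≥0) : ℝ) = lam * p1 * p2 :=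
    Real.coe_toNNReal _ (le_of_lt hcpos)
  constructor
  · have hratio : (((lam * p1 * p2).toNNReal : ℝ≥0) : ℝ) /
        ((((lam * p2 * (1 - p1)).toNNReal : ℝ≥0) : ℝ) + (((lam * p1 * p2).toNNReal : ℝ≥0) : ℝ))
        = p1 := by
      rw [ha2, hcc, show lam * p2 * (1 - p1) + lam * p1 * p2 = lam * p2 by ring,
        show lam * p1 * p2 = p1 * (lam * p2) by ring]
      field_simp
    apply bias_isBigO (β := (((lam * p2 * (1 - p1)).toNNReal : ℝ≥0) : ℝ))
      (by rw [ha2]; exact h2pos)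
    intro M hM
    have h := key μ _ _ _ (Real.toNNReal_pos.mpr h2pos) X1 X2 Y hmX1 hmX2 hmY hindep
      hX1 hX2 hY M hM
    rw [hratio] at h
    exact h
  · have hindep2 : iIndepFun
        (fun q : ℕ × Fin 3 => ![X2 q.1, X1 q.1, Y q.1] q.2) μ := by
      have e : (fun q : ℕ × Fin 3 => ![X2 q.1, X1 q.1, Y q.1] q.2)
          = fun q => (fun q' : ℕ × Fin 3 => ![X1 q'.1, X2 q'.1, Y q'.1] q'.2)
              ((Equiv.prodCongr (Equiv.refl ℕ) (Equiv.swap (0:Fin 3) 1)) q) := by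
        funext q
        obtain ⟨m, k⟩ := q
        fin_cases k <;> simp [Equiv.swap_apply_def] <;> rfl
      rw [e]
      exact iIndepFun_precomp_equiv hindep _
    have hratio : (((lam * p1 * p2).toNNReal : ℝ≥0) : ℝ) /
        ((((lam * p1 * (1 - p2)).toNNReal : ℝ≥0) : ℝ) + (((lam * p1 * p2).toNNReal : ℝ≥0) : ℝ))
        = p2 := by
      rw [ha1, hcc, show lam * p1 * (1 - p2) + lam * p1 * p2 = lam * p1 by ring,
        show lam * p1 * p2 = p2 * (lam * p1) by ring]
      field_simp
    apply bias_isBigO (β := (((lam * p1 * (1 - p2)).toNNReal : ℝ≥0) : ℝ))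
      (by rw [ha1]; exact h1pos)
    intro M hM
    have h := key μ _ _ _ (Real.toNNReal_pos.mpr h1pos) X2 X1 Y hmX2 hmX1 hmY hindep2
      hX2 hX1 hY M hM
    rw [hratio, ← sCov_comm X1 X2 Y M] at h
    exact h
end

section
/- Fix M ≥ 2 and data r_{m,1}, r_{m,2} ∈ ℕ (m = 1,…,M) with sample means r̄₁ > 0 and r̄₂ > 0. Define, for λ > 0 and p₁, p₂ ∈ (0,1), the log-likelihood LL(λ,p₁,p₂) = −λ[1−(1−p₁)(1−p₂)] + r̄₁·ln(λp₁(1−p₂)) + r̄₂·ln(λp₂(1−p₁)) − (1/M)Σ_m ln(r_{m,1}!·r_{m,2}!) + Ψ((1−p₁)(1−p₂)λ), where Ψ(z) = (1/M)Σ_{m=1}^M ln[Σ_{l=0}^{min(r_{m,1},r_{m,2})} C(r_{m,1},l)·C(r_{m,2},l)·l!·z^{−l}] for z > 0. If (λ*, p₁*, p₂*) with λ* > 0 and p₁*, p₂* ∈ (0,1) satisfies the first-order conditions ∂LL/∂λ = ∂LL/∂p₁ = ∂LL/∂p₂ = 0, then p₁* = r̄₁/λ*, p₂* = r̄₂/λ*,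 and λ* satisfies the one-variable equation −(λ*/r̄₁ − 1)(λ*/r̄₂ − 1)·Ψ′((1 − r̄₁/λ*)(1 − r̄₂/λ*)·λ*) = 1. -/
open Finset

/-- The function `Ψ(z) = (1/M) Σ_m ln [ Σ_{l=0}^{min(r_{m,1},r_{m,2})}
C(r_{m,1},l) C(r_{m,2},l) l! z^{−l} ]` appearing in the log-likelihood. -/
noncomputable def Psi (M : ℕ) (r1 r2 : Fin M → ℕ) (z : ℝ) : ℝ :=
  (∑ m : Fin M, Real.log
      (∑ l ∈ Finset.range (min (r1 m) (r2 m) + 1),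
        (Nat.choose (r1 m) l : ℝ) * (Nat.choose (r2 m) l : ℝ) * (Nat.factorial l : ℝ) *
          z ^ (-(l : ℤ)))) / M

/-- The (normalized) log-likelihood `LL(λ, p₁, p₂)` of the data. -/
noncomputable def LL (M : ℕ) (r1 r2 : Fin M → ℕ) (lam p1 p2 : ℝ) : ℝ :=
  -(lam * (1 - (1 - p1) * (1 - p2))) +
    ((∑ m : Fin M, (r1 m : ℝ)) / M) * Real.log (lam * p1 * (1 - p2)) +
    ((∑ m : Fin M, (r2 m : ℝ)) / M) * Real.log (lam * p2 * (1 - p1)) -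
    (∑ m : Fin M, Real.log ((Nat.factorial (r1 m) : ℝ) * (Nat.factorial (r2 m) : ℝ))) / M +
    Psi M r1 r2 ((1 - p1) * (1 - p2) * lam)

lemma psi_inner_pos (M : ℕ) (r1 r2 : Fin M → ℕ) (m : Fin M) {z : ℝ} (hz : 0 < z) :
    0 < ∑ l ∈ Finset.range (min (r1 m) (r2 m) + 1),
        (Nat.choose (r1 m) l : ℝ) * (Nat.choose (r2 m) l : ℝ) * (Nat.factorial l : ℝ) *
          z ^ (-(l : ℤ)) := by
  apply Finset.sum_pos'
  · intro l _
    positivity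
  · exact ⟨0, Finset.mem_range.mpr (Nat.succ_pos _), by simp⟩

lemma psi_diff (M : ℕ) (r1 r2 : Fin M → ℕ) {z : ℝ} (hz : 0 < z) :
    DifferentiableAt ℝ (Psi M r1 r2) z := by
  unfold Psi
  apply DifferentiableAt.div_const
  apply DifferentiableAt.fun_sum
  intro m _
  apply DifferentiableAt.log
  · apply DifferentiableAt.fun_sum
    intro l _
    exact (differentiableAt_const _).mul (differentiableAt_zpow.mpr (Or.inl hz.ne'))
  · exact (psi_inner_pos M r1 r2 m hz).ne'

/-- reduction of the maximum-likelihood first-order conditions to a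
one-variable equation.  If `(λ*, p₁*, p₂*)` with `λ* > 0`, `p₁*, p₂* ∈ (0,1)` satisfies
`∂LL/∂λ = ∂LL/∂p₁ = ∂LL/∂p₂ = 0`, then `p₁* = r̄₁/λ*`, `p₂* = r̄₂/λ*`, and
`−(λ*/r̄₁ − 1)(λ*/r̄₂ − 1) Ψ′((1 − r̄₁/λ*)(1 − r̄₂/λ*)λ*) = 1`. -/
theorem ml_first_order_reduction
    (M : ℕ) (hM : 2 ≤ M) (r1 r2 : Fin M → ℕ)
    (rb1 rb2 : ℝ)
    (hrb1 : rb1 = (∑ m : Fin M, (r1 m : ℝ)) / M)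
    (hrb2 : rb2 = (∑ m : Fin M, (r2 m : ℝ)) / M)
    (hrb1pos : 0 < rb1) (hrb2pos : 0 < rb2)
    (lamS p1S p2S : ℝ) (hlamS : 0 < lamS)
    (hp1S : p1S ∈ Set.Ioo (0 : ℝ) 1) (hp2S : p2S ∈ Set.Ioo (0 : ℝ) 1)
    (hFOC1 : deriv (fun l => LL M r1 r2 l p1S p2S) lamS = 0)
    (hFOC2 : deriv (fun p => LL M r1 r2 lamS p p2S) p1S = 0)
    (hFOC3 : deriv (fun p => LL M r1 r2 lamS p1S p) p2S = 0) :
    p1S = rb1 / lamS ∧ p2S = rb2 / lamS ∧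
      -((lamS / rb1 - 1) * (lamS / rb2 - 1)) *
        deriv (Psi M r1 r2) ((1 - rb1 / lamS) * (1 - rb2 / lamS) * lamS) = 1 := by
  obtain ⟨hp1, hp1'⟩ := hp1S
  obtain ⟨hp2, hp2'⟩ := hp2S
  have hq1 : (0:ℝ) < 1 - p1S := by linarith
  have hq2 : (0:ℝ) < 1 - p2S := by linarith
  have hz0pos : 0 < (1 - p1S) * (1 - p2S) * lamS := by positivity
  set D := deriv (Psi M r1 r2) ((1 - p1S) * (1 - p2S) * lamS) with hD
  have hPsiD : HasDerivAt (Psi M r1 r2) D ((1 - p1S) * (1 - p2S) * lamS) :=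
    (psi_diff M r1 r2 hz0pos).hasDerivAt
  have harg1 : lamS * p1S * (1 - p2S) ≠ 0 := by positivity
  have harg2 : lamS * p2S * (1 - p1S) ≠ 0 := by positivity
  have hC : HasDerivAt (fun _ : ℝ =>
      (∑ m : Fin M, Real.log ((Nat.factorial (r1 m) : ℝ) * (Nat.factorial (r2 m) : ℝ))) / M)
      0 lamS := hasDerivAt_const _ _
  -- FOC1
  have h1 : HasDerivAt (fun l => LL M r1 r2 l p1S p2S)
      (-(1 - (1 - p1S) * (1 - p2S)) + rb1 / lamS + rb2 / lamS + (1 - p1S) * (1 - p2S) * D)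
      lamS := by
    have h0 : HasDerivAt (fun l : ℝ => -(l * (1 - (1 - p1S) * (1 - p2S))))
        (-(1 * (1 - (1 - p1S) * (1 - p2S)))) lamS :=
      ((hasDerivAt_id lamS).mul_const _).neg
    have hl1 : HasDerivAt (fun l : ℝ => rb1 * Real.log (l * p1S * (1 - p2S)))
        (rb1 * ((lamS * p1S * (1 - p2S))⁻¹ * (1 * p1S * (1 - p2S)))) lamS :=
      by have := ((Real.hasDerivAt_log harg1).comp lamS
        (((hasDerivAt_id lamS).mul_const p1S).mul_const (1 - p2S))).const_mul rb1; exact this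
    have hl2 : HasDerivAt (fun l : ℝ => rb2 * Real.log (l * p2S * (1 - p1S)))
        (rb2 * ((lamS * p2S * (1 - p1S))⁻¹ * (1 * p2S * (1 - p1S)))) lamS :=
      by have := ((Real.hasDerivAt_log harg2).comp lamS
        (((hasDerivAt_id lamS).mul_const p2S).mul_const (1 - p1S))).const_mul rb2; exact this
    have hps : HasDerivAt (fun l : ℝ => Psi M r1 r2 ((1 - p1S) * (1 - p2S) * l))
        (D * ((1 - p1S) * (1 - p2S) * 1)) lamS :=
      hPsiD.comp lamS ((hasDerivAt_id lamS).const_mul ((1 - p1S) * (1 - p2S)))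
    have h := (((h0.add hl1).add hl2).sub (hasDerivAt_const lamS
      ((∑ m : Fin M, Real.log ((Nat.factorial (r1 m) : ℝ) * (Nat.factorial (r2 m) : ℝ))) / M))).add hps
    have heq : (fun l => LL M r1 r2 l p1S p2S) = fun l : ℝ =>
        -(l * (1 - (1 - p1S) * (1 - p2S))) + rb1 * Real.log (l * p1S * (1 - p2S)) +
        rb2 * Real.log (l * p2S * (1 - p1S)) -
        (∑ m : Fin M, Real.log ((Nat.factorial (r1 m) : ℝ) * (Nat.factorial (r2 m) : ℝ))) / M +
        Psi M r1 r2 ((1 - p1S) * (1 - p2S) * l) := by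
      funext l; rw [LL, hrb1, hrb2]
    rw [heq]
    refine h.congr_deriv ?_
    field_simp
    ring
  -- FOC2
  have h2 : HasDerivAt (fun p => LL M r1 r2 lamS p p2S)
      (-(lamS * (1 - p2S)) + rb1 / p1S - rb2 / (1 - p1S) - (1 - p2S) * lamS * D)
      p1S := by
    have h0 : HasDerivAt (fun p : ℝ => -(lamS * (1 - (1 - p) * (1 - p2S))))
        (-(lamS * (-(-1 * (1 - p2S))))) p1S :=
      ((((hasDerivAt_id p1S).const_sub 1).mul_const (1 - p2S)).const_sub 1).const_mul lamS |>.neg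
    have hl1 : HasDerivAt (fun p : ℝ => rb1 * Real.log (lamS * p * (1 - p2S)))
        (rb1 * ((lamS * p1S * (1 - p2S))⁻¹ * (lamS * 1 * (1 - p2S)))) p1S :=
      by have := ((Real.hasDerivAt_log harg1).comp p1S
        (((hasDerivAt_id p1S).const_mul lamS).mul_const (1 - p2S))).const_mul rb1; exact this
    have hl2 : HasDerivAt (fun p : ℝ => rb2 * Real.log (lamS * p2S * (1 - p)))
        (rb2 * ((lamS * p2S * (1 - p1S))⁻¹ * (lamS * p2S * -1))) p1S :=
      by have := ((Real.hasDerivAt_log harg2).comp p1S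
        (((hasDerivAt_id p1S).const_sub 1).const_mul (lamS * p2S))).const_mul rb2; exact this
    have hps : HasDerivAt (fun p : ℝ => Psi M r1 r2 ((1 - p) * (1 - p2S) * lamS))
        (D * (-1 * (1 - p2S) * lamS)) p1S :=
      by have := hPsiD.comp p1S ((((hasDerivAt_id p1S).const_sub 1).mul_const (1 - p2S)).mul_const lamS); exact this
    have h := (((h0.add hl1).add hl2).sub (hasDerivAt_const p1S
      ((∑ m : Fin M, Real.log ((Nat.factorial (r1 m) : ℝ) * (Nat.factorial (r2 m) : ℝ))) / M))).add hps
    have heq : (fun p => LL M r1 r2 lamS p p2S) = fun p : ℝ =>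
        -(lamS * (1 - (1 - p) * (1 - p2S))) + rb1 * Real.log (lamS * p * (1 - p2S)) +
        rb2 * Real.log (lamS * p2S * (1 - p)) -
        (∑ m : Fin M, Real.log ((Nat.factorial (r1 m) : ℝ) * (Nat.factorial (r2 m) : ℝ))) / M +
        Psi M r1 r2 ((1 - p) * (1 - p2S) * lamS) := by
      funext p; rw [LL, hrb1, hrb2]
    rw [heq]
    refine h.congr_deriv ?_
    field_simp
    ring
  -- FOC3
  have h3 : HasDerivAt (fun p => LL M r1 r2 lamS p1S p)
      (-(lamS * (1 - p1S)) + rb2 / p2S - rb1 / (1 - p2S) - (1 - p1S) * lamS * D)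
      p2S := by
    have h0 : HasDerivAt (fun p : ℝ => -(lamS * (1 - (1 - p1S) * (1 - p))))
        (-(lamS * (-((1 - p1S) * -1)))) p2S :=
      ((((hasDerivAt_id p2S).const_sub 1).const_mul (1 - p1S)).const_sub 1).const_mul lamS |>.neg
    have hl1 : HasDerivAt (fun p : ℝ => rb1 * Real.log (lamS * p1S * (1 - p)))
        (rb1 * ((lamS * p1S * (1 - p2S))⁻¹ * (lamS * p1S * -1))) p2S :=
      by have := ((Real.hasDerivAt_log harg1).comp p2S
        (((hasDerivAt_id p2S).const_sub 1).const_mul (lamS * p1S))).const_mul rb1; exact this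
    have hl2 : HasDerivAt (fun p : ℝ => rb2 * Real.log (lamS * p * (1 - p1S)))
        (rb2 * ((lamS * p2S * (1 - p1S))⁻¹ * (lamS * 1 * (1 - p1S)))) p2S :=
      by have := ((Real.hasDerivAt_log harg2).comp p2S
        (((hasDerivAt_id p2S).const_mul lamS).mul_const (1 - p1S))).const_mul rb2; exact this
    have hps : HasDerivAt (fun p : ℝ => Psi M r1 r2 ((1 - p1S) * (1 - p) * lamS))
        (D * ((1 - p1S) * -1 * lamS)) p2S :=
      by have := hPsiD.comp p2S ((((hasDerivAt_id p2S).const_sub 1).const_mul (1 - p1S)).mul_const lamS); exact this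
    have h := (((h0.add hl1).add hl2).sub (hasDerivAt_const p2S
      ((∑ m : Fin M, Real.log ((Nat.factorial (r1 m) : ℝ) * (Nat.factorial (r2 m) : ℝ))) / M))).add hps
    have heq : (fun p => LL M r1 r2 lamS p1S p) = fun p : ℝ =>
        -(lamS * (1 - (1 - p1S) * (1 - p))) + rb1 * Real.log (lamS * p1S * (1 - p)) +
        rb2 * Real.log (lamS * p * (1 - p1S)) -
        (∑ m : Fin M, Real.log ((Nat.factorial (r1 m) : ℝ) * (Nat.factorial (r2 m) : ℝ))) / M +
        Psi M r1 r2 ((1 - p1S) * (1 - p) * lamS) := by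
      funext p; rw [LL, hrb1, hrb2]
    rw [heq]
    refine h.congr_deriv ?_
    field_simp
    ring
  have e1 : -(1 - (1 - p1S) * (1 - p2S)) + rb1 / lamS + rb2 / lamS
      + (1 - p1S) * (1 - p2S) * D = 0 := by rw [← h1.deriv]; exact hFOC1
  have e2 : -(lamS * (1 - p2S)) + rb1 / p1S - rb2 / (1 - p1S) - (1 - p2S) * lamS * D = 0 := by
    rw [← h2.deriv]; exact hFOC2
  have e3 : -(lamS * (1 - p1S)) + rb2 / p2S - rb1 / (1 - p2S) - (1 - p1S) * lamS * D = 0 := by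
    rw [← h3.deriv]; exact hFOC3
  have e1' := e1
  field_simp at e1 e2 e3
  have key1 : rb1 = lamS * p1S := by linear_combination p1S * e1 + e2
  have key2 : rb2 = lamS * p2S := by linear_combination p2S * e1 + e3
  have hkp1 : p1S = rb1 / lamS := by rw [key1]; field_simp
  have hkp2 : p2S = rb2 / lamS := by rw [key2]; field_simp
  refine ⟨hkp1, hkp2, ?_⟩
  have hpoint : (1 - rb1 / lamS) * (1 - rb2 / lamS) * lamS = (1 - p1S) * (1 - p2S) * lamS := by
    rw [← hkp1, ← hkp2]
  rw [hpoint, ← hD, key1, key2]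
  rw [key1, key2] at e1'
  field_simp at e1' ⊢
  linear_combination (-1) * e1'
end
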